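/- arXiv:1404.4172 — 8 statements merged into one kernel-verified Lean document; each statement's English description precedes it below -/
import Mathlib

section
/- Let H and K be Hilbert spaces, A : H → K a bounded linear operator, and B a bounded operator on H. Then 0 ≤ B ≤ A*A if and only if there exists a bounded operator C on K with 0 ≤ C ≤ I such that B = A* C A. -/
open ContinuousLinearMap RCLike

set_option maxHeartbeats 1000000 in
set_option synthInstance.maxHeartbeats 1000000 in
/-- Let `H` and `K` be (complex) Hilbert spaces, `A : H → K` a bounded linear
operator and `B` a bounded operator on `H`.  Then `0 ≤ B ≤ A*A` (in the Loewner order, i.e.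
`B` and `A*A - B` are positive) if and only if there exists a bounded operator `C` on `K`
with `0 ≤ C ≤ I` such that `B = A* C A`. -/
theorem operator_lemma_existence
    {H K : Type*} [NormedAddCommGroup H] [InnerProductSpace ℂ H] [CompleteSpace H]
    [NormedAddCommGroup K] [InnerProductSpace ℂ K] [CompleteSpace K]
    (A : H →L[ℂ] K) (B : H →L[ℂ] H) :
    (B.IsPositive ∧ ((ContinuousLinearMap.adjoint A) ∘L A - B).IsPositive) ↔
      ∃ C : K →L[ℂ] K, C.IsPositive ∧ ((1 : K →L[ℂ] K) - C).IsPositive ∧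
        B = (ContinuousLinearMap.adjoint A) ∘L C ∘L A := by
  constructor
  · rintro ⟨hB, hAB⟩
    have hB0 : (0 : H →L[ℂ] H) ≤ B := (ContinuousLinearMap.nonneg_iff_isPositive B).mpr hB
    set S : H →L[ℂ] H := CFC.sqrt B with hSdef
    have hS0 : (0 : H →L[ℂ] H) ≤ S := CFC.sqrt_nonneg (a := B)
    have hSS : S ∘L S = B := CFC.sqrt_mul_sqrt_self B hB0
    have hSsa : IsSelfAdjoint S := IsSelfAdjoint.of_nonneg hS0
    have hSsym : (S : H →ₗ[ℂ] H).IsSymmetric := isSelfAdjoint_iff_isSymmetric.mp hSsa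
    -- the key norm inequality
    have hnorm : ∀ x : H, ‖S x‖ ≤ ‖A x‖ := by
      intro x
      have hsym := hSsym (S x) x
      simp only [ContinuousLinearMap.coe_coe] at hsym
      have h1 : re (inner ℂ (B x) x : ℂ) = ‖S x‖ ^ 2 := by
        rw [← hSS, comp_apply, hsym, inner_self_eq_norm_sq]
      have h2 : re (inner ℂ (((ContinuousLinearMap.adjoint A) ∘L A) x) x : ℂ) = ‖A x‖ ^ 2 := by
        rw [comp_apply, adjoint_inner_left A x (A x), inner_self_eq_norm_sq]
      have h3 := hAB.2 x
      rw [reApplyInnerSelf_apply, sub_apply, inner_sub_left, map_sub] at h3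
      have h4 : ‖S x‖ ^ 2 ≤ ‖A x‖ ^ 2 := by rw [← h1, ← h2]; linarith
      nlinarith [norm_nonneg (S x), norm_nonneg (A x)]
    -- the (closure of the) range of A
    set R : Submodule ℂ K := LinearMap.range (A : H →ₗ[ℂ] K) with hRdef
    set M : Submodule ℂ K := R.topologicalClosure with hMdef
    haveI : CompleteSpace M := R.isClosed_topologicalClosure.completeSpace_coe
    have hRM : R ≤ M := R.le_topologicalClosure
    -- the lift of S over ker A, defined on the range of A
    have hker : LinearMap.ker (A : H →ₗ[ℂ] K) ≤ LinearMap.ker (S : H →ₗ[ℂ] H) := by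
      intro x hx
      have hx' : A x = 0 := hx
      have := hnorm x
      rw [hx', norm_zero] at this
      simpa [LinearMap.mem_ker] using norm_le_zero_iff.mp this
    set e' := (A : H →ₗ[ℂ] K).quotKerEquivRange with he'def
    set D₀ : R →ₗ[ℂ] H :=
      ((LinearMap.ker (A : H →ₗ[ℂ] K)).liftQ (S : H →ₗ[ℂ] H) hker) ∘ₗ
        (e'.symm : R →ₗ[ℂ] (H ⧸ LinearMap.ker (A : H →ₗ[ℂ] K))) with hD₀def
    have hD₀A : ∀ (x : H) (h : (A : H →ₗ[ℂ] K) x ∈ R), D₀ ⟨(A : H →ₗ[ℂ] K) x, h⟩ = S x := by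
      intro x h
      have hs : e'.symm ⟨(A : H →ₗ[ℂ] K) x, h⟩ = Submodule.Quotient.mk x := by
        rw [LinearEquiv.symm_apply_eq]
        exact Subtype.ext ((A : H →ₗ[ℂ] K).quotKerEquivRange_apply_mk x).symm
      have hrfl : D₀ ⟨(A : H →ₗ[ℂ] K) x, h⟩ =
          ((LinearMap.ker (A : H →ₗ[ℂ] K)).liftQ (S : H →ₗ[ℂ] H) hker)
            (e'.symm ⟨(A : H →ₗ[ℂ] K) x, h⟩) := rfl
      rw [hrfl, hs, Submodule.liftQ_apply]
      rfl
    have hD₀bound : ∀ u : R, ‖D₀ u‖ ≤ 1 * ‖u‖ := by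
      rintro ⟨u, hu⟩
      obtain ⟨x, rfl⟩ := hu
      rw [one_mul, hD₀A x ⟨x, rfl⟩]
      exact hnorm x
    set D₁ : R →L[ℂ] H := LinearMap.mkContinuous D₀ 1 hD₀bound with hD₁def
    have hD₁norm : ‖D₁‖ ≤ 1 := LinearMap.mkContinuous_norm_le D₀ zero_le_one hD₀bound
    -- the inclusion of R into M as a continuous linear map
    set j : R →L[ℂ] M := LinearMap.mkContinuous (Submodule.inclusion hRM) 1
      (fun x => by rw [one_mul]; rfl) with hjdef
    have hj_dense : DenseRange j := by
      rw [denseRange_iff_closure_range]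
      ext m
      simp only [Set.mem_univ, iff_true]
      rw [closure_subtype]
      have himg : Subtype.val '' Set.range j = (R : Set K) := by
        ext k
        constructor
        · rintro ⟨m', ⟨u, rfl⟩, rfl⟩; exact u.2
        · intro hk; exact ⟨j ⟨k, hk⟩, ⟨⟨k, hk⟩, rfl⟩, rfl⟩
      rw [himg]
      exact m.2
    have hjb : ∀ u : R, ‖u‖ ≤ (1 : NNReal) * ‖j u‖ := fun u => by
      rw [NNReal.coe_one, one_mul]; rfl
    set Dext : M →L[ℂ] H :=
      D₁.extend j with hDextdef
    have hDextnorm : ‖Dext‖ ≤ 1 := by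
      have h := D₁.opNorm_extend_le hj_dense (N := 1) hjb
      rw [NNReal.coe_one, one_mul] at h
      exact h.trans hD₁norm
    set D : K →L[ℂ] H := Dext ∘L (M.orthogonalProjectionOnto : K →L[ℂ] M).comp
      (ContinuousLinearMap.id ℂ K) with hDdef
    have hDapply : ∀ k : K, D k = Dext (M.orthogonalProjectionOnto k) := fun k => rfl
    have hDA : ∀ x : H, D (A x) = S x := by
      intro x
      have hmemR : (A : H →ₗ[ℂ] K) x ∈ R := ⟨x, rfl⟩
      have hmemM : A x ∈ M := hRM hmemR
      have hproj : M.orthogonalProjectionOnto (A x) = (⟨A x, hmemM⟩ : M) :=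
        Submodule.orthogonalProjectionOnto_mem_subspace_eq_self (⟨A x, hmemM⟩ : M)
      have hjm : (⟨A x, hmemM⟩ : M) = j ⟨(A : H →ₗ[ℂ] K) x, hmemR⟩ := rfl
      rw [hDapply, hproj, hjm, ContinuousLinearMap.extend_eq D₁ hj_dense (isUniformEmbedding_of_bound j hjb).isUniformInducing]
      exact hD₀A x hmemR
    have hDnorm : ∀ k : K, ‖D k‖ ≤ ‖k‖ := by
      intro k
      rw [hDapply]
      calc ‖Dext (M.orthogonalProjectionOnto k)‖
          ≤ ‖Dext‖ * ‖(M.orthogonalProjectionOnto k : M)‖ := Dext.le_opNorm _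
        _ ≤ 1 * ‖(M.orthogonalProjectionOnto k : M)‖ :=
            mul_le_mul_of_nonneg_right hDextnorm (norm_nonneg _)
        _ = ‖(M.orthogonalProjectionOnto k : M)‖ := one_mul _
        _ ≤ ‖M.orthogonalProjectionOnto‖ * ‖k‖ := (M.orthogonalProjectionOnto).le_opNorm k
        _ ≤ 1 * ‖k‖ := mul_le_mul_of_nonneg_right (Submodule.orthogonalProjectionOnto_norm_le M) (norm_nonneg _)
        _ = ‖k‖ := one_mul _
    -- define C
    refine ⟨(ContinuousLinearMap.adjoint D) ∘L D, ?_, ?_, ?_⟩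
    · have h := isPositive_one.adjoint_conj (T := (1 : H →L[ℂ] H)) D
      simpa [one_def] using h
    · have hCsa : IsSelfAdjoint ((ContinuousLinearMap.adjoint D) ∘L D) := by
        have h := isPositive_one.adjoint_conj (T := (1 : H →L[ℂ] H)) D
        simpa [one_def] using h.isSelfAdjoint
      constructor
      · exact isSelfAdjoint_iff_isSymmetric.mp ((IsSelfAdjoint.one (R := K →L[ℂ] K)).sub hCsa)
      · intro x
        rw [reApplyInnerSelf_apply, sub_apply, ContinuousLinearMap.one_apply, inner_sub_left, comp_apply,
          adjoint_inner_left D x (D x), map_sub, inner_self_eq_norm_sq, inner_self_eq_norm_sq]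
        have := hDnorm x
        nlinarith [norm_nonneg (D x), norm_nonneg x]
    · ext x
      refine ext_inner_right ℂ fun y => ?_
      calc (inner ℂ (B x) y : ℂ) = inner ℂ ((S ∘L S) x) y := by rw [hSS]
        _ = inner ℂ (S x) (S y) := by
            have := hSsym (S x) y
            simpa using this
        _ = inner ℂ (D (A x)) (D (A y)) := by rw [hDA, hDA]
        _ = inner ℂ ((ContinuousLinearMap.adjoint D) (D (A x))) (A y) :=
            (adjoint_inner_left D (A y) (D (A x))).symm
        _ = inner ℂ ((ContinuousLinearMap.adjoint A)
              ((ContinuousLinearMap.adjoint D) (D (A x)))) y :=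
            (adjoint_inner_left A y ((ContinuousLinearMap.adjoint D) (D (A x)))).symm
        _ = inner ℂ (((ContinuousLinearMap.adjoint A) ∘L
              ((ContinuousLinearMap.adjoint D) ∘L D) ∘L A) x) y := rfl
  · rintro ⟨C, hC, h1C, rfl⟩
    constructor
    · exact hC.adjoint_conj A
    · have heq : (ContinuousLinearMap.adjoint A) ∘L A -
          (ContinuousLinearMap.adjoint A) ∘L C ∘L A =
          (ContinuousLinearMap.adjoint A) ∘L ((1 : K →L[ℂ] K) - C) ∘L A := by
        rw [sub_comp, comp_sub, one_def, id_comp]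
      rw [heq]
      exact h1C.adjoint_conj A
end

section
/- Let H and K be Hilbert spaces and A : H → K a bounded linear operator. The operator C satisfying 0 ≤ C ≤ I and B = A* C A (for a given B with 0 ≤ B ≤ A*A) is unique for every such B if and only if the range of A is dense in K. -/
open ContinuousLinearMap

local notation "⟪" x ", " y "⟫" => @inner ℂ _ _ x y

/-- A self-adjoint idempotent is positive. -/
lemma isPositive_of_sa_idem {K : Type*} [NormedAddCommGroup K] [InnerProductSpace ℂ K]
    [CompleteSpace K] (Q : K →L[ℂ] K) (h1 : IsSelfAdjoint Q) (h2 : ∀ x, Q (Q x) = Q x) :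
    Q.IsPositive := by
  refine ⟨ContinuousLinearMap.isSelfAdjoint_iff_isSymmetric.mp h1, fun x => ?_⟩
  rw [ContinuousLinearMap.reApplyInnerSelf]
  have h4 := ContinuousLinearMap.adjoint_inner_left Q x (Q x)
  rw [h1.adjoint_eq] at h4
  have h5 : ⟪Q x, x⟫ = ⟪Q x, Q x⟫ := by
    conv_lhs => rw [← h2 x]
    exact h4
  rw [h5]
  exact inner_self_nonneg

set_option maxHeartbeats 1000000 in
/-- Let `H`, `K` be complex Hilbert spaces and `A : H → K` bounded linear.
The operator `C` with `0 ≤ C ≤ I` and `B = A* C A` (for a given `B` with `0 ≤ B ≤ A*A`) is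
unique for every such `B` if and only if the range of `A` is dense in `K`. -/
theorem operator_lemma_uniqueness
    {H K : Type*} [NormedAddCommGroup H] [InnerProductSpace ℂ H] [CompleteSpace H]
    [NormedAddCommGroup K] [InnerProductSpace ℂ K] [CompleteSpace K]
    (A : H →L[ℂ] K) :
    (∀ B : H →L[ℂ] H, B.IsPositive → ((ContinuousLinearMap.adjoint A) ∘L A - B).IsPositive →
      ∃! C : K →L[ℂ] K, C.IsPositive ∧ ((1 : K →L[ℂ] K) - C).IsPositive ∧
        B = (ContinuousLinearMap.adjoint A) ∘L C ∘L A) ↔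
      DenseRange A := by
  constructor
  · -- uniqueness for all B implies dense range
    intro h
    set S : Submodule ℂ K := (LinearMap.range (A : H →ₗ[ℂ] K)).topologicalClosure with hS
    have hScl : IsClosed (S : Set K) := (LinearMap.range (A : H →ₗ[ℂ] K)).isClosed_topologicalClosure
    haveI : CompleteSpace S := hScl.completeSpace_coe
    set P : K →L[ℂ] K := S.subtypeL ∘L S.orthogonalProjectionOnto with hP
    have hPmem : ∀ x, P x ∈ S := fun x => (S.orthogonalProjectionOnto x).2
    have hPid : ∀ x ∈ S, P x = x := by
      intro x hx
      show ((S.orthogonalProjectionOnto x : S) : K) = x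
      exact Submodule.starProjection_eq_self_iff.mpr hx
    have hPP : ∀ x, P (P x) = P x := fun x => hPid _ (hPmem x)
    have hPsa : IsSelfAdjoint P := isSelfAdjoint_starProjection S
    have hPpos : P.IsPositive := isPositive_of_sa_idem P hPsa hPP
    have h1Ppos : ((1 : K →L[ℂ] K) - P).IsPositive := by
      refine isPositive_of_sa_idem _ ((IsSelfAdjoint.one _).sub hPsa) fun x => ?_
      simp [ContinuousLinearMap.sub_apply, map_sub, hPP]
    have hApos : ((ContinuousLinearMap.adjoint A) ∘L A).IsPositive := by
      have h' := (isPositive_one (E := K)).adjoint_conj A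
      rwa [ContinuousLinearMap.one_def, ContinuousLinearMap.id_comp] at h' 
    have hzero : ((ContinuousLinearMap.adjoint A) ∘L A -
        (ContinuousLinearMap.adjoint A) ∘L A).IsPositive := by
      rw [sub_self]; exact isPositive_zero
    obtain ⟨C, _, huniq⟩ := h ((ContinuousLinearMap.adjoint A) ∘L A) hApos hzero
    have hPA : ∀ ψ, P (A ψ) = A ψ := fun ψ =>
      hPid _ (Submodule.le_topologicalClosure _ (LinearMap.mem_range_self (A : H →ₗ[ℂ] K) ψ))
    have hPeq : P = (1 : K →L[ℂ] K) := by
      have h1 : (1 : K →L[ℂ] K) = C :=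
        huniq 1 ⟨isPositive_one, by rw [sub_self]; exact isPositive_zero, by
          rw [ContinuousLinearMap.one_def, ContinuousLinearMap.id_comp]⟩
      have h2 : P = C := by
        refine huniq P ⟨hPpos, h1Ppos, ?_⟩
        ext ψ
        simp [ContinuousLinearMap.comp_apply, hPA]
      rw [h2, h1]
    intro x
    have : x ∈ S := by
      have := hPeq ▸ (hPmem x)
      simpa using this
    have hsub : (S : Set K) ⊆ closure (Set.range ⇑A) := by
      rw [hS, Submodule.topologicalClosure_coe]
      apply closure_mono
      rintro y ⟨ψ, rfl⟩
      exact ⟨ψ, rfl⟩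
    exact hsub this
  · -- dense range implies existence and uniqueness
    intro hd B hB hAB
    -- square root of B
    have hB0 : (0 : H →L[ℂ] H) ≤ B := (ContinuousLinearMap.nonneg_iff_isPositive B).mpr hB
    set R : H →L[ℂ] H := CFC.sqrt B with hRdef
    have hR0 : (0 : H →L[ℂ] H) ≤ R := CFC.sqrt_nonneg B
    have hRsa : IsSelfAdjoint R :=
      ((ContinuousLinearMap.nonneg_iff_isPositive R).mp hR0).isSelfAdjoint
    have hRR : ∀ ψ, R (R ψ) = B ψ := by
      intro ψ
      have : R * R = B := by
        rw [← pow_two, hRdef, CFC.sq_sqrt B hB0]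
      rw [← this]; rfl
    have hinner : ∀ φ ψ, ⟪R φ, R ψ⟫ = ⟪φ, B ψ⟫ := by
      intro φ ψ
      rw [← hRR ψ]
      have h6 := ContinuousLinearMap.adjoint_inner_left R (R ψ) φ
      rw [hRsa.adjoint_eq] at h6
      exact h6
    have key : ∀ ψ, ‖R ψ‖ ≤ ‖A ψ‖ := by
      intro ψ
      have h1 : ‖R ψ‖ ^ 2 = RCLike.re ⟪ψ, B ψ⟫ := by
        rw [← hinner ψ ψ, inner_self_eq_norm_sq]
      have h2 : RCLike.re ⟪ψ, B ψ⟫ ≤ ‖A ψ‖ ^ 2 := by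
        have h3 := hAB.re_inner_nonneg_right ψ
        have h4 : ⟪ψ, ((ContinuousLinearMap.adjoint A) ∘L A) ψ⟫ = ⟪A ψ, A ψ⟫ :=
          ContinuousLinearMap.adjoint_inner_right A ψ (A ψ)
        simp only [ContinuousLinearMap.sub_apply, inner_sub_right, map_sub,
          ContinuousLinearMap.comp_apply] at h3 h4 ⊢
        rw [sub_nonneg] at h3
        calc RCLike.re ⟪ψ, B ψ⟫ ≤ RCLike.re ⟪ψ, (ContinuousLinearMap.adjoint A) (A ψ)⟫ := h3
          _ = ‖A ψ‖ ^ 2 := by rw [h4, inner_self_eq_norm_sq]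
      nlinarith [norm_nonneg (R ψ), norm_nonneg (A ψ), h1 ▸ h2]
    -- factor R through the range of A
    have hker : LinearMap.ker (A : H →ₗ[ℂ] K) ≤ LinearMap.ker (R : H →ₗ[ℂ] H) := by
      intro ψ hψ
      have hψ' : A ψ = 0 := hψ
      have := key ψ
      rw [hψ', norm_zero] at this
      simpa [LinearMap.mem_ker] using norm_le_zero_iff.mp this
    set Aₗ : H →ₗ[ℂ] K := (A : H →ₗ[ℂ] K)
    set T₀ : (H ⧸ LinearMap.ker Aₗ) →ₗ[ℂ] H := Submodule.liftQ _ (R : H →ₗ[ℂ] H) hker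
    set T₁lin : ↥(LinearMap.range Aₗ) →ₗ[ℂ] H :=
      T₀ ∘ₗ (Aₗ.quotKerEquivRange.symm : ↥(LinearMap.range Aₗ) →ₗ[ℂ] (H ⧸ LinearMap.ker Aₗ))
      with hT₁lin
    have hT₁apply : ∀ (ψ : H) (h : Aₗ ψ ∈ LinearMap.range Aₗ), T₁lin ⟨Aₗ ψ, h⟩ = R ψ := by
      intro ψ hmem
      simp only [hT₁lin, LinearMap.comp_apply, LinearEquiv.coe_coe]
      rw [Aₗ.quotKerEquivRange_symm_apply_image ψ hmem]
      simp [T₀]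
    have hbound : ∀ y : ↥(LinearMap.range Aₗ), ‖T₁lin y‖ ≤ 1 * ‖y‖ := by
      rintro ⟨y, hy⟩
      obtain ⟨ψ, rfl⟩ := hy
      rw [hT₁apply ψ (LinearMap.mem_range_self Aₗ ψ)]
      rw [one_mul]; exact key ψ
    set T₁ : ↥(LinearMap.range Aₗ) →L[ℂ] H := T₁lin.mkContinuous 1 hbound with hT₁
    set e : ↥(LinearMap.range Aₗ) →L[ℂ] K := (LinearMap.range Aₗ).subtypeL with he
    have h_e : IsUniformInducing e := isometry_subtype_coe.isUniformInducing
    have h_dense : DenseRange e := by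
      have hsub : Set.range ⇑A ⊆ Set.range ⇑e := by
        rintro y ⟨ψ, rfl⟩
        exact ⟨⟨Aₗ ψ, LinearMap.mem_range_self Aₗ ψ⟩, rfl⟩
      exact hd.mono hsub
    set T : K →L[ℂ] H := T₁.extend e with hT
    have hTA : ∀ ψ, T (A ψ) = R ψ := by
      intro ψ
      have : A ψ = e ⟨Aₗ ψ, LinearMap.mem_range_self Aₗ ψ⟩ := rfl
      rw [this, hT, ContinuousLinearMap.extend_eq _ h_dense h_e]
      rw [hT₁, LinearMap.mkContinuous_apply, hT₁apply]
    have hTnorm : ∀ x, ‖T x‖ ≤ ‖x‖ := by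
      intro x
      refine hd.induction_on x (isClosed_le (T.continuous.norm) continuous_norm) fun ψ => ?_
      rw [hTA]; exact key ψ
    set C : K →L[ℂ] K := (ContinuousLinearMap.adjoint T) ∘L T with hC
    have hCpos : C.IsPositive := by
      have h' := (isPositive_one (E := H)).adjoint_conj T
      rwa [ContinuousLinearMap.one_def, ContinuousLinearMap.id_comp] at h' 
    have hCapp : ∀ x y : K, ⟪x, C y⟫ = ⟪T x, T y⟫ := fun x y =>
      ContinuousLinearMap.adjoint_inner_right T x (T y)
    have h1C : ((1 : K →L[ℂ] K) - C).IsPositive := by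
      refine ⟨ContinuousLinearMap.isSelfAdjoint_iff_isSymmetric.mp ((IsSelfAdjoint.one _).sub hCpos.isSelfAdjoint), fun x => ?_⟩
      rw [ContinuousLinearMap.reApplyInnerSelf]
      have : RCLike.re ⟪((1 : K →L[ℂ] K) - C) x, x⟫ = ‖x‖ ^ 2 - ‖T x‖ ^ 2 := by
        rw [ContinuousLinearMap.sub_apply, inner_sub_left, map_sub]
        congr 1
        · simp only [ContinuousLinearMap.one_apply]; exact inner_self_eq_norm_sq x
        · have h5 : ⟪C x, x⟫ = ⟪T x, T x⟫ := by
            rw [hC, ContinuousLinearMap.comp_apply]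
            exact ContinuousLinearMap.adjoint_inner_left T x (T x)
          rw [h5, inner_self_eq_norm_sq]
      rw [this]
      have := hTnorm x
      nlinarith [norm_nonneg (T x)]
    have hBC : B = (ContinuousLinearMap.adjoint A) ∘L C ∘L A := by
      ext ψ
      apply ext_inner_left ℂ
      intro φ
      rw [ContinuousLinearMap.comp_apply, ContinuousLinearMap.comp_apply,
        ContinuousLinearMap.adjoint_inner_right A φ (C (A ψ)), hCapp, hTA, hTA, hinner]
    refine ⟨C, ⟨hCpos, h1C, hBC⟩, ?_⟩
    -- uniqueness
    rintro C' ⟨_, _, hBC'⟩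
    have heq : ∀ x y : K, ⟪x, C' y⟫ = ⟪x, C y⟫ := by
      intro x y
      have hx : ∀ ψ φ, ⟪A φ, C' (A ψ)⟫ = ⟪A φ, C (A ψ)⟫ := by
        intro ψ φ
        rw [← ContinuousLinearMap.adjoint_inner_right A φ (C' (A ψ)),
          ← ContinuousLinearMap.adjoint_inner_right A φ (C (A ψ))]
        have : (ContinuousLinearMap.adjoint A) (C' (A ψ)) =
            (ContinuousLinearMap.adjoint A) (C (A ψ)) := by
          have := hBC'.symm.trans hBC
          calc (ContinuousLinearMap.adjoint A) (C' (A ψ))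
              = ((ContinuousLinearMap.adjoint A) ∘L C' ∘L A) ψ := rfl
            _ = ((ContinuousLinearMap.adjoint A) ∘L C ∘L A) ψ := by rw [this]
            _ = (ContinuousLinearMap.adjoint A) (C (A ψ)) := rfl
        rw [this]
      -- first extend in y, then in x
      have hy : ∀ y, ∀ φ, ⟪A φ, C' y⟫ = ⟪A φ, C y⟫ := by
        intro y φ
        refine hd.induction_on y ?_ fun ψ => hx ψ φ
        exact isClosed_eq ((continuous_const.inner (C'.continuous)))
          ((continuous_const.inner (C.continuous)))
      refine hd.induction_on x ?_ fun φ => hy y φ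
      exact isClosed_eq ((continuous_id.inner continuous_const))
        ((continuous_id.inner continuous_const))
    ext y
    apply ext_inner_left ℂ
    intro v
    exact heq v y
end

section
/- In C², with φ₁ = (1,0), φ₂ = (0,1), ψ = (1/√2)(φ₁ − φ₂), E₁ = (4/7)|φ₁⟩⟨φ₁|, E₂ = (4/7)|φ₂⟩⟨φ₂|, E₃ = I − E₁ − E₂, F₁ = (4/7)|ψ⟩⟨ψ|, the three operator inequalities E₁ + F₁ ≤ I, E₂ + F₁ ≤ I, and E₃ + F₁ ≤ I all hold. -/
open Matrix
open scoped ComplexOrder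

lemma psd_of_scaled (A : Matrix (Fin 2) (Fin 2) ℂ) (M : Matrix (Fin 2) (Fin 2) ℂ)
    (h : M = (7:ℂ)⁻¹ • (Aᴴ * A)) : M.PosSemidef := by
  have hc : ((((Real.sqrt 7)⁻¹:ℝ):ℂ) • A)ᴴ * ((((Real.sqrt 7)⁻¹:ℝ):ℂ) • A)
      = (7:ℂ)⁻¹ • (Aᴴ * A) := by
    rw [conjTranspose_smul, Matrix.smul_mul, Matrix.mul_smul, smul_smul]
    congr 1
    rw [Complex.star_def, Complex.conj_ofReal, ← Complex.ofReal_mul]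
    have : (Real.sqrt 7)⁻¹ * (Real.sqrt 7)⁻¹ = (7:ℝ)⁻¹ := by
      rw [← mul_inv, Real.mul_self_sqrt]
      norm_num
    rw [this]; push_cast; ring
  rw [h, ← hc]
  exact posSemidef_conjTranspose_mul_self _

/-- In `ℂ²`, with `φ₁ = (1,0)`, `φ₂ = (0,1)`, `ψ = (1/√2)(φ₁ - φ₂)`,
`E₁ = (4/7)|φ₁⟩⟨φ₁|`, `E₂ = (4/7)|φ₂⟩⟨φ₂|`, `E₃ = I - E₁ - E₂`, `F₁ = (4/7)|ψ⟩⟨ψ|`,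
the three operator inequalities `E₁ + F₁ ≤ I`, `E₂ + F₁ ≤ I`, `E₃ + F₁ ≤ I` all hold,
where `T ≤ I` means `1 - T` is positive semidefinite (Loewner order). -/
theorem binarization_inequalities :
    let φ₁ : Fin 2 → ℂ := ![1, 0]
    let φ₂ : Fin 2 → ℂ := ![0, 1]
    let ψ : Fin 2 → ℂ := ((1 / Real.sqrt 2 : ℝ) : ℂ) • (φ₁ - φ₂)
    let E₁ : Matrix (Fin 2) (Fin 2) ℂ := (4 / 7 : ℂ) • vecMulVec φ₁ (star φ₁)
    let E₂ : Matrix (Fin 2) (Fin 2) ℂ := (4 / 7 : ℂ) • vecMulVec φ₂ (star φ₂)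
    let E₃ : Matrix (Fin 2) (Fin 2) ℂ := 1 - E₁ - E₂
    let F₁ : Matrix (Fin 2) (Fin 2) ℂ := (4 / 7 : ℂ) • vecMulVec ψ (star ψ)
    ((1 : Matrix (Fin 2) (Fin 2) ℂ) - (E₁ + F₁)).PosSemidef ∧
      ((1 : Matrix (Fin 2) (Fin 2) ℂ) - (E₂ + F₁)).PosSemidef ∧
      ((1 : Matrix (Fin 2) (Fin 2) ℂ) - (E₃ + F₁)).PosSemidef := by
  intro φ₁ φ₂ ψ E₁ E₂ E₃ F₁
  have h2 : (Real.sqrt 2 : ℝ) * Real.sqrt 2 = 2 := Real.mul_self_sqrt (by norm_num)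
  refine ⟨psd_of_scaled !![1,2;0,1] _ ?_, psd_of_scaled !![2,1;1,0] _ ?_,
    psd_of_scaled !![1,1;1,1] _ ?_⟩ <;>
  · ext i j
    fin_cases i <;> fin_cases j <;>
      simp [E₁, E₂, E₃, F₁, ψ, φ₁, φ₂, vecMulVec_apply, Matrix.mul_apply,
        Fin.sum_univ_two, Matrix.one_apply, Complex.ext_iff, div_mul_div_comm, -Matrix.vecMulVec_cons, -Matrix.cons_vecMulVec] <;>
      field_simp <;> nlinarith [h2, Real.sqrt_nonneg 2]
end

section
/- Two binary observables (effects E and F on a Hilbert space H) are jointly measurable if and only if they are coexistent; explicitly, if there is a POVM M and sets Z₁, Z₂ with M(Z₁)=E and M(Z₂)=F, then the map N({(x₁,x₂)}) := M(Z₁^{x₁} ∩ Z₂^{x₂}), where Z^+ = Z and Z^- is the complement, defines a joint observable for (E, I−E) and (F, I−F). -/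
open scoped InnerProductSpace

/-- A positive-operator-valued measure (normalized, defined on all sets, vanishing on
non-measurable sets). -/
structure POVM (Ω : Type*) [MeasurableSpace Ω]
    (H : Type*) [NormedAddCommGroup H] [InnerProductSpace ℂ H] [CompleteSpace H] where
  toFun : Set Ω → (H →L[ℂ] H)
  isPositive' : ∀ s, (toFun s).IsPositive
  empty' : toFun ∅ = 0
  total' : toFun Set.univ = 1
  not_measurable' : ∀ s, ¬ MeasurableSet s → toFun s = 0
  m_iUnion' : ∀ f : ℕ → Set Ω, (∀ n, MeasurableSet (f n)) → Pairwise (Function.onFun Disjoint f) →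
    ∀ x : H, HasSum (fun n => toFun (f n) x) (toFun (⋃ n, f n) x)

variable {Ω Ω' Ωb : Type*} [MeasurableSpace Ω] [MeasurableSpace Ω'] [MeasurableSpace Ωb]
variable {H : Type*} [NormedAddCommGroup H] [InnerProductSpace ℂ H] [CompleteSpace H]

/-- Sharp observable: a projection-valued measure. -/
def POVM.IsSharp (P : POVM Ω H) : Prop := ∀ s, IsIdempotentElem (P.toFun s)

/-- A POVM is discrete if it is concentrated on a countable set of points. -/
def POVM.Discrete (A : POVM Ω H) : Prop :=
  ∃ D : Set Ω, D.Countable ∧ ∀ s, MeasurableSet s → s ∩ D = ∅ → A.toFun s = 0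

/-- Extremality in the convex set of POVMs on `(Ω, Σ)`. -/
def POVM.Extreme (A : POVM Ω H) : Prop :=
  ∀ (A₁ A₂ : POVM Ω H) (t : ℝ), 0 < t → t < 1 →
    (∀ s, A.toFun s = (t : ℂ) • A₁.toFun s + ((1 - t : ℝ) : ℂ) • A₂.toFun s) →
    A₁.toFun = A.toFun ∧ A₂.toFun = A.toFun

/-- Joint measurability: a POVM on the product σ-algebra having `A` and `B` as marginals. -/
def JointlyMeasurable (A : POVM Ω H) (B : POVM Ω' H) : Prop :=
  ∃ N : POVM (Ω × Ω') H,
    (∀ X, MeasurableSet X → N.toFun (X ×ˢ Set.univ) = A.toFun X) ∧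
    (∀ Y, MeasurableSet Y → N.toFun (Set.univ ×ˢ Y) = B.toFun Y)

/-- `ran A ⊆ ran M`. -/
def RanSubset (A : POVM Ω H) (M : POVM Ωb H) : Prop :=
  ∀ X, MeasurableSet X → ∃ Z, MeasurableSet Z ∧ M.toFun Z = A.toFun X

/-- Coexistence: a common mother observable on some measurable space contains both ranges. -/
def Coexistent (A : POVM Ω H) (B : POVM Ω' H) : Prop :=
  ∃ (Ωm : Type) (_ : MeasurableSpace Ωm) (M : POVM Ωm H), RanSubset A M ∧ RanSubset B M

/-- Joint measurability of two binary observables `(E, 1-E)` and `(F, 1-F)`. -/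
def BinJointlyMeasurable {H : Type*} [NormedAddCommGroup H] [InnerProductSpace ℂ H]
    [CompleteSpace H] (E F : H →L[ℂ] H) : Prop :=
  ∃ G : Bool → Bool → (H →L[ℂ] H),
    (∀ x y, (G x y).IsPositive) ∧
    (G true true + G true false + G false true + G false false = 1) ∧
    (G true true + G true false = E) ∧
    (G true true + G false true = F)

/-- Coexistence of two binary observables `(E, 1-E)` and `(F, 1-F)`. -/
def BinCoexistent {H : Type*} [NormedAddCommGroup H] [InnerProductSpace ℂ H]
    [CompleteSpace H] (E F : H →L[ℂ] H) : Prop :=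
  ∃ (Ωm : Type) (_ : MeasurableSpace Ωm) (M : POVM Ωm H) (Z₁ Z₂ : Set Ωm),
    MeasurableSet Z₁ ∧ MeasurableSet Z₂ ∧ M.toFun Z₁ = E ∧ M.toFun Z₂ = F

open Classical in
/-- Additivity of a POVM on two disjoint measurable sets. -/
lemma POVM.add_of_disjoint (M : POVM Ωb H) {s t : Set Ωb} (hs : MeasurableSet s)
    (ht : MeasurableSet t) (hd : Disjoint s t) :
    M.toFun (s ∪ t) = M.toFun s + M.toFun t := by
  ext x
  set f : ℕ → Set Ωb := fun n => if n = 0 then s else if n = 1 then t else ∅ with hf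
  have hmeas : ∀ n, MeasurableSet (f n) := by
    intro n; simp only [hf]; split_ifs <;> simp [hs, ht]
  have hpair : Pairwise (Function.onFun Disjoint f) := by
    intro m n hmn
    simp only [Function.onFun, hf]
    split_ifs <;>
      first
        | (exfalso; omega)
        | exact hd
        | exact hd.symm
        | exact Set.disjoint_empty _
        | exact Set.empty_disjoint _
  have hU : (⋃ n, f n) = s ∪ t := by
    apply Set.Subset.antisymm
    · intro a ha
      simp only [Set.mem_iUnion, hf] at ha
      obtain ⟨n, hn⟩ := ha
      split_ifs at hn with h1 h2 <;> simp_all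
    · intro a ha
      rcases ha with h | h
      · exact Set.mem_iUnion.2 ⟨0, by simp [hf, h]⟩
      · exact Set.mem_iUnion.2 ⟨1, by simp [hf, h]⟩
  have h1 := M.m_iUnion' f hmeas hpair x
  rw [hU] at h1
  have h2 : HasSum (fun n => M.toFun (f n) x) (M.toFun s x + M.toFun t x) := by
    have h3 := hasSum_sum_of_ne_finset_zero (L := SummationFilter.unconditional ℕ) (s := ({0, 1} : Finset ℕ))
      (f := fun n => M.toFun (f n) x) (by
        intro n hn
        simp only [Finset.mem_insert, Finset.mem_singleton, not_or] at hn
        simp [hf, hn.1, hn.2, M.empty'])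
    rwa [Finset.sum_pair (by norm_num : (0:ℕ) ≠ 1), show f 0 = s by simp [hf],
      show f 1 = t by simp [hf]] at h3
  simpa using h1.unique h2

open Classical in
/-- The joint POVM on `Bool × Bool` built from a joint observable `G`. -/
noncomputable def binPOVM {H : Type*} [NormedAddCommGroup H] [InnerProductSpace ℂ H]
    [CompleteSpace H] (G : Bool → Bool → (H →L[ℂ] H))
    (hpos : ∀ x y, (G x y).IsPositive)
    (htot : G true true + G true false + G false true + G false false = 1) :
    POVM (Bool × Bool) H where
  toFun s := ∑ p : Bool × Bool, if p ∈ s then G p.1 p.2 else 0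
  isPositive' s := by
    refine Finset.sum_induction _ _ (fun a b ha hb => ha.add hb)
      ContinuousLinearMap.isPositive_zero ?_
    intro p _
    split_ifs
    · exact hpos p.1 p.2
    · exact ContinuousLinearMap.isPositive_zero
  empty' := by simp
  total' := by
    simp only [Set.mem_univ, if_true, Fintype.sum_prod_type, Fintype.sum_bool]
    rw [← htot]; abel
  not_measurable' s hs := absurd s.toFinite.measurableSet hs
  m_iUnion' f hm hd x := by
    simp only [ContinuousLinearMap.sum_apply, apply_ite (fun A : H →L[ℂ] H => A x),
      ContinuousLinearMap.zero_apply]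
    refine hasSum_sum ?_
    intro p _
    by_cases hp : p ∈ ⋃ n, f n
    · obtain ⟨n₀, hn₀⟩ := Set.mem_iUnion.1 hp
      rw [if_pos hp]
      have heq : (fun n => if p ∈ f n then G p.1 p.2 x else 0) =
          (fun n => if n = n₀ then G p.1 p.2 x else 0) := by
        funext n
        by_cases h : n = n₀
        · simp [h, hn₀]
        · have hnp : p ∉ f n := fun hpn => Set.disjoint_left.1 (hd h) hpn hn₀
          simp [h, hnp]
      rw [heq]
      exact hasSum_ite_eq n₀ _
    · rw [if_neg hp]
      have hnot : ∀ n, p ∉ f n := fun n hn => hp (Set.mem_iUnion.2 ⟨n, hn⟩)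
      simpa [hnot] using (hasSum_zero : HasSum (fun _ : ℕ => (0 : H)) 0)

/-- Two binary observables (effects `E`, `F`) are jointly measurable iff they
are coexistent; explicitly, if `M(Z₁) = E` and `M(Z₂) = F` for a POVM `M`, then
`N(x₁,x₂) := M(Z₁^{x₁} ∩ Z₂^{x₂})` (with `Z⁺ = Z`, `Z⁻ = Zᶜ`) is a joint observable for
`(E, 1-E)` and `(F, 1-F)`. -/
theorem binary_JM_iff_coexistent {H : Type*} [NormedAddCommGroup H] [InnerProductSpace ℂ H]
    [CompleteSpace H] (E F : H →L[ℂ] H)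
    (hE : E.IsPositive ∧ ((1 : H →L[ℂ] H) - E).IsPositive)
    (hF : F.IsPositive ∧ ((1 : H →L[ℂ] H) - F).IsPositive) :
    (BinJointlyMeasurable E F ↔ BinCoexistent E F) ∧
    (∀ (Ωm : Type) (_ : MeasurableSpace Ωm) (M : POVM Ωm H) (Z₁ Z₂ : Set Ωm),
      MeasurableSet Z₁ → MeasurableSet Z₂ → M.toFun Z₁ = E → M.toFun Z₂ = F →
      ((∀ (W₁ W₂ : Set Ωm), (M.toFun (W₁ ∩ W₂)).IsPositive) ∧
        M.toFun (Z₁ ∩ Z₂) + M.toFun (Z₁ ∩ Z₂ᶜ) + M.toFun (Z₁ᶜ ∩ Z₂) + M.toFun (Z₁ᶜ ∩ Z₂ᶜ) = 1 ∧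
        M.toFun (Z₁ ∩ Z₂) + M.toFun (Z₁ ∩ Z₂ᶜ) = E ∧
        M.toFun (Z₁ ∩ Z₂) + M.toFun (Z₁ᶜ ∩ Z₂) = F)) := by
  have part2 : ∀ (Ωm : Type) (_ : MeasurableSpace Ωm) (M : POVM Ωm H) (Z₁ Z₂ : Set Ωm),
      MeasurableSet Z₁ → MeasurableSet Z₂ → M.toFun Z₁ = E → M.toFun Z₂ = F →
      ((∀ (W₁ W₂ : Set Ωm), (M.toFun (W₁ ∩ W₂)).IsPositive) ∧
        M.toFun (Z₁ ∩ Z₂) + M.toFun (Z₁ ∩ Z₂ᶜ) + M.toFun (Z₁ᶜ ∩ Z₂) + M.toFun (Z₁ᶜ ∩ Z₂ᶜ) = 1 ∧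
        M.toFun (Z₁ ∩ Z₂) + M.toFun (Z₁ ∩ Z₂ᶜ) = E ∧
        M.toFun (Z₁ ∩ Z₂) + M.toFun (Z₁ᶜ ∩ Z₂) = F) := by
    intro Ωm _ M Z₁ Z₂ h₁ h₂ hZE hZF
    have key : ∀ (W : Set Ωm), MeasurableSet W →
        M.toFun (W ∩ Z₂) + M.toFun (W ∩ Z₂ᶜ) = M.toFun W := by
      intro W hW
      rw [← M.add_of_disjoint (hW.inter h₂) (hW.inter h₂.compl)
        (Set.disjoint_left.2 fun a ha hb => hb.2 ha.2), Set.inter_union_compl]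
    have hE1 : M.toFun (Z₁ ∩ Z₂) + M.toFun (Z₁ ∩ Z₂ᶜ) = E := by rw [key Z₁ h₁, hZE]
    have hE2 : M.toFun (Z₁ᶜ ∩ Z₂) + M.toFun (Z₁ᶜ ∩ Z₂ᶜ) = M.toFun Z₁ᶜ := key Z₁ᶜ h₁.compl
    have hF1 : M.toFun (Z₁ ∩ Z₂) + M.toFun (Z₁ᶜ ∩ Z₂) = F := by
      have key' : M.toFun (Z₂ ∩ Z₁) + M.toFun (Z₂ ∩ Z₁ᶜ) = M.toFun Z₂ := by
        rw [← M.add_of_disjoint (h₂.inter h₁) (h₂.inter h₁.compl)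
          (Set.disjoint_left.2 fun a ha hb => hb.2 ha.2), Set.inter_union_compl]
      rw [Set.inter_comm Z₁ Z₂, Set.inter_comm Z₁ᶜ Z₂, key', hZF]
    have htot : M.toFun (Z₁ ∩ Z₂) + M.toFun (Z₁ ∩ Z₂ᶜ) + M.toFun (Z₁ᶜ ∩ Z₂) +
        M.toFun (Z₁ᶜ ∩ Z₂ᶜ) = 1 := by
      have h3 : M.toFun Z₁ + M.toFun Z₁ᶜ = 1 := by
        rw [← M.add_of_disjoint h₁ h₁.compl disjoint_compl_right, Set.union_compl_self,
          M.total']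
      calc M.toFun (Z₁ ∩ Z₂) + M.toFun (Z₁ ∩ Z₂ᶜ) + M.toFun (Z₁ᶜ ∩ Z₂) + M.toFun (Z₁ᶜ ∩ Z₂ᶜ)
          = (M.toFun (Z₁ ∩ Z₂) + M.toFun (Z₁ ∩ Z₂ᶜ)) +
            (M.toFun (Z₁ᶜ ∩ Z₂) + M.toFun (Z₁ᶜ ∩ Z₂ᶜ)) := by abel
        _ = M.toFun Z₁ + M.toFun Z₁ᶜ := by rw [key Z₁ h₁, hE2]
        _ = 1 := h3
    exact ⟨fun W₁ W₂ => M.isPositive' _, htot, hE1, hF1⟩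
  refine ⟨⟨?_, ?_⟩, part2⟩
  · rintro ⟨G, hpos, htot, hGE, hGF⟩
    classical
    refine ⟨Bool × Bool, inferInstance, binPOVM G hpos htot,
      {p : Bool × Bool | p.1 = true}, {p : Bool × Bool | p.2 = true},
      (Set.toFinite _).measurableSet, (Set.toFinite _).measurableSet, ?_, ?_⟩
    · simp only [binPOVM, Set.mem_setOf_eq]
      rw [← hGE]
      simp [Fintype.sum_prod_type, Fintype.sum_bool]
    · simp only [binPOVM, Set.mem_setOf_eq]
      rw [← hGF]
      simp [Fintype.sum_prod_type, Fintype.sum_bool]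
  · rintro ⟨Ωm, mΩ, M, Z₁, Z₂, h₁, h₂, hZE, hZF⟩
    obtain ⟨-, htot, hE1, hF1⟩ := part2 Ωm mΩ M Z₁ Z₂ h₁ h₂ hZE hZF
    exact ⟨fun b c => M.toFun ((bif b then Z₁ else Z₁ᶜ) ∩ (bif c then Z₂ else Z₂ᶜ)),
      fun b c => M.isPositive' _, htot, hE1, hF1⟩
end

section
/- Let A be a POVM on a measurable space (Ω,Σ) with minimal Naimark dilation (K, P, J), i.e., A(X) = J* P(X) J with P a projection-valued measure on K, J : H → K an isometry, and span{P(X)Jφ} dense in K. Suppose A is extreme in the convex set of POVMs. Then for any POVM M on (Ω̄,Σ̄) and any X ∈ Σ, Z ∈ Σ̄ with M(Z) = A(X), and any set Z' ∈ Σ̄, the operator C with 0 ≤ C ≤ P(X) and M(Z' ∩ Z) = J* C P(X) J is such that in fact M(Z' ∩ Z) = J* P(X) C P(X) J. -/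
open scoped InnerProductSpace

variable {Ω Ω' Ωb : Type*} [MeasurableSpace Ω] [MeasurableSpace Ω'] [MeasurableSpace Ωb]
variable {H : Type*} [NormedAddCommGroup H] [InnerProductSpace ℂ H] [CompleteSpace H]

open ContinuousLinearMap in
/-- If `0 ≤ C ≤ P` with `P` an (orthogonal) projection, then `P ∘ C = C`. -/
lemma proj_comp_eq_of_le {K : Type*} [NormedAddCommGroup K] [InnerProductSpace ℂ K]
    [CompleteSpace K] (P C : K →L[ℂ] K) (hPpos : P.IsPositive) (hPidem : IsIdempotentElem P)
    (hCpos : C.IsPositive) (hCle : (P - C).IsPositive) :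
    P ∘L C = C := by
  have hC0 : (0 : K →L[ℂ] K) ≤ C := (ContinuousLinearMap.nonneg_iff_isPositive C).mpr hCpos
  set S : K →L[ℂ] K := CFC.sqrt C with hSdef
  have hSnn : (0 : K →L[ℂ] K) ≤ S := CFC.sqrt_nonneg C
  have hSsa : IsSelfAdjoint S := IsSelfAdjoint.of_nonneg hSnn
  have hSS : S * S = C := by
    have h := CFC.sq_sqrt C hC0
    rwa [sq] at h
  have hSsymm : ∀ x y : K, ⟪S x, y⟫_ℂ = ⟪x, S y⟫_ℂ :=
    (ContinuousLinearMap.isSelfAdjoint_iff_isSymmetric.mp hSsa)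
  -- key: C v = 0 whenever P v = 0
  have key : ∀ v : K, P v = 0 → C v = 0 := by
    intro v hv
    have h1 : 0 ≤ RCLike.re ⟪(P - C) v, v⟫_ℂ := (RCLike.nonneg_iff.mp (hCle.inner_nonneg_left v)).1
    have h2 : 0 ≤ RCLike.re ⟪C v, v⟫_ℂ := (RCLike.nonneg_iff.mp (hCpos.inner_nonneg_left v)).1
    have h3 : ⟪(P - C) v, v⟫_ℂ = - ⟪C v, v⟫_ℂ := by
      simp [ContinuousLinearMap.sub_apply, inner_sub_left, hv]
    have h4 : RCLike.re ⟪C v, v⟫_ℂ = 0 := by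
      rw [h3, map_neg] at h1
      change (0 : ℝ) ≤ - Complex.re _ at h1
      change Complex.re _ = 0
      change (0 : ℝ) ≤ Complex.re _ at h2
      linarith
    have h5 : ⟪C v, v⟫_ℂ = ⟪S v, S v⟫_ℂ := by
      have : C v = S (S v) := by rw [← hSS]; rfl
      rw [this]; exact hSsymm (S v) v
    have h6 : ‖S v‖ ^ 2 = 0 := by
      have hn := @inner_self_eq_norm_sq ℂ _ _ _ _ (S v)
      rw [← hn, ← h5]
      exact h4
    have h7 : S v = 0 := by
      have : ‖S v‖ = 0 := by nlinarith [norm_nonneg (S v)]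
      simpa using this
    have hCv : C v = S (S v) := by rw [← hSS]; rfl
    rw [hCv, h7, map_zero]
  -- hence C ∘ P = C
  have hCP : C ∘L P = C := by
    ext x
    have hv : P (x - P x) = 0 := by
      have h := congrFun (congrArg DFunLike.coe hPidem) x
      simp only [ContinuousLinearMap.mul_apply] at h
      simp [map_sub, h]
    have hz := key (x - P x) hv
    rw [map_sub, sub_eq_zero] at hz
    exact hz.symm
  -- take adjoints to conclude
  have hstar := congrArg star hCP
  rw [star_eq_adjoint, star_eq_adjoint] at hstar
  rw [← hCpos.isSelfAdjoint.adjoint_eq, ← hPpos.isSelfAdjoint.adjoint_eq]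
  rw [ContinuousLinearMap.adjoint_comp] at hstar
  exact hstar

/-- Let `A` be a POVM on `(Ω,Σ)` with minimal Naimark dilation `(K, P, J)`,
and suppose `A` is extreme.  Then for any POVM `M` on `(Ω̄,Σ̄)`, any `X ∈ Σ`, `Z ∈ Σ̄` with
`M(Z) = A(X)`, and any `Z' ∈ Σ̄`: if `C` satisfies `0 ≤ C ≤ P(X)` and
`M(Z' ∩ Z) = J* C P(X) J`, then in fact `M(Z' ∩ Z) = J* P(X) C P(X) J`. -/
theorem compression_formula
    {K : Type*} [NormedAddCommGroup K] [InnerProductSpace ℂ K] [CompleteSpace K]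
    (A : POVM Ω H) (P : POVM Ω K) (hP : P.IsSharp) (J : H →L[ℂ] K)
    (hJ : ∀ x : H, ‖J x‖ = ‖x‖)
    (hdil : ∀ X, A.toFun X = (ContinuousLinearMap.adjoint J) ∘L P.toFun X ∘L J)
    (hmin : Dense (Submodule.span ℂ {y : K | ∃ (X : Set Ω) (φ : H), y = P.toFun X (J φ)} : Set K))
    (hext : A.Extreme)
    (M : POVM Ωb H) (X : Set Ω) (hX : MeasurableSet X)
    (Z Z' : Set Ωb) (hZ : MeasurableSet Z) (hZ' : MeasurableSet Z')
    (hMZ : M.toFun Z = A.toFun X)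
    (C : K →L[ℂ] K) (hCpos : C.IsPositive) (hCle : (P.toFun X - C).IsPositive)
    (hC : M.toFun (Z' ∩ Z) = (ContinuousLinearMap.adjoint J) ∘L (C ∘L P.toFun X) ∘L J) :
    M.toFun (Z' ∩ Z) =
      (ContinuousLinearMap.adjoint J) ∘L (P.toFun X ∘L C ∘L P.toFun X) ∘L J := by
  have hPC : P.toFun X ∘L C = C :=
    proj_comp_eq_of_le (P.toFun X) C (P.isPositive' X) (hP X) hCpos hCle
  rw [hC, ← ContinuousLinearMap.comp_assoc (P.toFun X) C (P.toFun X), hPC]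
end

section
/- Let A be an extreme discrete POVM on (Ω,Σ) with effects A_i = A(X_i) for disjoint sets X_i, with minimal Naimark dilation (K,P,J), P_i := P(X_i). Suppose M is a POVM on (Ω̄,Σ̄) with ran A ⊆ ran M, so M(Z_i) = A_i for some Z_i ∈ Σ̄. Then M(Z_i ∩ Z_j) = 0 for all i ≠ j with A_i ≠ 0 ≠ A_j. -/
open scoped InnerProductSpace

variable {Ω Ω' Ωb : Type*} [MeasurableSpace Ω] [MeasurableSpace Ω'] [MeasurableSpace Ωb]
variable {H : Type*} [NormedAddCommGroup H] [InnerProductSpace ℂ H] [CompleteSpace H]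

section AuxStatement8

/-- If a sum of two positive operators vanishes, each vanishes. -/
lemma aux8_zero_of_add_pos {a b : H →L[ℂ] H} (ha : a.IsPositive) (hb : b.IsPositive)
    (h : a + b = 0) : a = 0 := by
  have h1 : (0 : H →L[ℂ] H) ≤ a := (ContinuousLinearMap.nonneg_iff_isPositive a).2 ha
  have h2 : a ≤ 0 := by
    rw [ContinuousLinearMap.le_def]
    have hba : b = -a := eq_neg_of_add_eq_zero_right h
    simpa [← hba] using hb
  exact le_antisymm h2 h1

/-- Finite (pair) additivity of a POVM. -/
lemma aux8_pairAdd (N : POVM Ω H) {a b : Set Ω} (ha : MeasurableSet a) (hb : MeasurableSet b)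
    (hd : Disjoint a b) : N.toFun (a ∪ b) = N.toFun a + N.toFun b := by
  classical
  set f : ℕ → Set Ω := fun k => match k with | 0 => a | 1 => b | _ => ∅ with hf
  have hmeas : ∀ n, MeasurableSet (f n) := by
    intro n
    rcases n with _ | _ | n
    · exact ha
    · exact hb
    · exact MeasurableSet.empty
  have f0 : f 0 = a := rfl
  have f1 : f 1 = b := rfl
  have f2 : ∀ m, f (m + 1 + 1) = ∅ := fun m => rfl
  have hdisj : Pairwise (Function.onFun Disjoint f) := by
    intro k l hkl
    rcases k with _ | _ | k <;> rcases l with _ | _ | l <;>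
      simp_all [Function.onFun, hd, hd.symm, disjoint_bot_left, disjoint_bot_right]
  have hun : (⋃ n, f n) = a ∪ b := by
    ext y
    simp only [Set.mem_iUnion, Set.mem_union]
    constructor
    · rintro ⟨n, hn⟩
      rcases n with _ | _ | n
      · exact Or.inl hn
      · exact Or.inr hn
      · exact absurd hn (Set.notMem_empty y)
    · rintro (hy | hy)
      · exact ⟨0, hy⟩
      · exact ⟨1, hy⟩
  ext x
  have h1 := N.m_iUnion' f hmeas hdisj x
  rw [hun] at h1
  have h2 : HasSum (fun n => N.toFun (f n) x) (N.toFun a x + N.toFun b x) := by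
    have h3 : ∀ k ∉ ({0, 1} : Finset ℕ), N.toFun (f k) x = 0 := by
      intro k hk
      rcases k with _ | _ | k
      · simp at hk
      · simp at hk
      · show N.toFun ∅ x = 0
        rw [N.empty']; rfl
    have h4 : HasSum (fun n => N.toFun (f n) x) (∑ k ∈ ({0, 1} : Finset ℕ), N.toFun (f k) x) :=
      hasSum_sum_of_ne_finset_zero h3
    rwa [Finset.sum_pair (by norm_num : (0:ℕ) ≠ 1)] at h4
  simpa using h1.unique h2

lemma aux8_diffAdd (N : POVM Ω H) {a b : Set Ω} (ha : MeasurableSet a) (hb : MeasurableSet b)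
    (hsub : b ⊆ a) : N.toFun a = N.toFun b + N.toFun (a \ b) := by
  rw [← aux8_pairAdd N hb (ha.diff hb) Set.disjoint_sdiff_right, Set.union_diff_cancel hsub]

lemma aux8_null_subset (N : POVM Ω H) {a b : Set Ω} (ha : MeasurableSet a) (hb : MeasurableSet b)
    (hsub : b ⊆ a) (h : N.toFun a = 0) : N.toFun b = 0 := by
  have := aux8_diffAdd N ha hb hsub
  rw [h] at this
  exact aux8_zero_of_add_pos (N.isPositive' b) (N.isPositive' (a \ b)) this.symm

lemma aux8_null_iUnion (N : POVM Ω H) (f : ℕ → Set Ω) (hm : ∀ n, MeasurableSet (f n))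
    (h : ∀ n, N.toFun (f n) = 0) : N.toFun (⋃ n, f n) = 0 := by
  have hdm : ∀ n, MeasurableSet (disjointed f n) := MeasurableSet.disjointed hm
  have hd0 : ∀ n, N.toFun (disjointed f n) = 0 := fun n =>
    aux8_null_subset N (hm n) (hdm n) (disjointed_subset f n) (h n)
  ext x
  have h1 := N.m_iUnion' (disjointed f) hdm (disjoint_disjointed f) x
  rw [iUnion_disjointed] at h1
  have h2 : HasSum (fun n => N.toFun (disjointed f n) x) (0 : H) := by
    convert hasSum_zero with n
    rw [hd0 n]; rfl
  simpa using h1.unique h2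

/-- σ-additivity holds along families whose pairwise intersections are null. -/
lemma aux8_hasSum_of_pairwise_null (N : POVM Ω H) (f : ℕ → Set Ω)
    (hm : ∀ n, MeasurableSet (f n))
    (hnull : ∀ a b, a ≠ b → N.toFun (f a ∩ f b) = 0) (x : H) :
    HasSum (fun n => N.toFun (f n) x) (N.toFun (⋃ n, f n) x) := by
  classical
  have hdm : ∀ n, MeasurableSet (disjointed f n) := MeasurableSet.disjointed hm
  have key : ∀ n, N.toFun (disjointed f n) = N.toFun (f n) := by
    intro n
    have hsub : disjointed f n ⊆ f n := disjointed_subset f n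
    have hdiffnull : N.toFun (f n \ disjointed f n) = 0 := by
      set g : ℕ → Set Ω := fun m => if m < n then f n ∩ f m else ∅ with hg
      have hgm : ∀ m, MeasurableSet (g m) := by
        intro m
        by_cases hmn : m < n <;> simp [hg, hmn, (hm n).inter (hm m), MeasurableSet.empty]
      have hgnull : ∀ m, N.toFun (g m) = 0 := by
        intro m
        by_cases hmn : m < n
        · simp only [hg, if_pos hmn]
          exact hnull n m (Nat.ne_of_gt hmn)
        · simp only [hg, if_neg hmn]
          exact N.empty'
      have hsub2 : f n \ disjointed f n ⊆ ⋃ m, g m := by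
        intro y hy
        rcases hy with ⟨hyf, hynd⟩
        rw [disjointed_eq_inter_compl] at hynd
        have : ¬ (y ∈ ⋂ i, ⋂ (_ : i < n), (f i)ᶜ) := fun hmem => hynd ⟨hyf, hmem⟩
        simp only [Set.mem_iInter, Set.mem_compl_iff, not_forall, not_not] at this
        obtain ⟨m, hmn, hym⟩ := this
        exact Set.mem_iUnion.2 ⟨m, by simp [hg, hmn, hyf, hym]⟩
      exact aux8_null_subset N (MeasurableSet.iUnion hgm) ((hm n).diff (hdm n)) hsub2
        (aux8_null_iUnion N g hgm hgnull)
    have := aux8_diffAdd N (hm n) (hdm n) hsub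
    rw [hdiffnull] at this
    simpa using this.symm
  have h1 := N.m_iUnion' (disjointed f) hdm (disjoint_disjointed f) x
  rw [iUnion_disjointed] at h1
  have : (fun n => N.toFun (f n) x) = fun n => N.toFun (disjointed f n) x := by
    funext n; rw [key n]
  rwa [this]

end AuxStatement8

section Aux8B

open Classical

variable {Ω Ωb : Type*} [MeasurableSpace Ω] [MeasurableSpace Ωb]
variable {H : Type*} [NormedAddCommGroup H] [InnerProductSpace ℂ H] [CompleteSpace H]

lemma aux8_null_union (N : POVM Ω H) {a b : Set Ω} (ha : MeasurableSet a) (hb : MeasurableSet b)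
    (h1 : N.toFun a = 0) (h2 : N.toFun b = 0) : N.toFun (a ∪ b) = 0 := by
  have h3 := aux8_diffAdd N (ha.union hb) ha Set.subset_union_left
  rw [Set.union_diff_left] at h3
  rw [h3, h1, aux8_null_subset N hb (hb.diff ha) Set.diff_subset h2, add_zero]

/-- Two points are equivalent if no measurable set separates them. -/
def aux8Equiv {Ω : Type*} [MeasurableSpace Ω] (x y : Ω) : Prop :=
  ∀ s : Set Ω, MeasurableSet s → (x ∈ s ↔ y ∈ s)

lemma aux8Equiv_refl (x : Ω) : aux8Equiv x x := fun _ _ => Iff.rfl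

lemma aux8Equiv_symm {x y : Ω} (h : aux8Equiv x y) : aux8Equiv y x :=
  fun s hs => (h s hs).symm

lemma aux8Equiv_trans {x y z : Ω} (h1 : aux8Equiv x y) (h2 : aux8Equiv y z) :
    aux8Equiv x z := fun s hs => (h1 s hs).trans (h2 s hs)

lemma aux8_exists_sep {x y : Ω} (h : ¬ aux8Equiv x y) :
    ∃ s : Set Ω, MeasurableSet s ∧ y ∈ s ∧ x ∉ s := by
  rw [aux8Equiv] at h
  push_neg at h
  obtain ⟨s, hs, hiff⟩ := h
  rcases hiff with ⟨hx, hy⟩ | ⟨hx, hy⟩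
  · exact ⟨sᶜ, hs.compl, hy, fun hc => hc hx⟩
  · exact ⟨s, hs, hy, hx⟩

/-- A POVM concentrated on the range of `g` takes equal values on sets with equal trace. -/
lemma aux8_traceEq (A : POVM Ω H) (g : ℕ → Ω)
    (hAnull : ∀ s, MeasurableSet s → (∀ k, g k ∉ s) → A.toFun s = 0)
    {s t : Set Ω} (hs : MeasurableSet s) (ht : MeasurableSet t)
    (h : ∀ k, g k ∈ s ↔ g k ∈ t) : A.toFun s = A.toFun t := by
  have h1 : A.toFun (s \ t) = 0 :=
    hAnull _ (hs.diff ht) (fun k hk => hk.2 ((h k).1 hk.1))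
  have h2 : A.toFun (t \ s) = 0 :=
    hAnull _ (ht.diff hs) (fun k hk => hk.2 ((h k).2 hk.1))
  have e1 := aux8_diffAdd A hs (hs.inter ht) Set.inter_subset_left
  rw [Set.diff_self_inter, h1, add_zero] at e1
  have e2 := aux8_diffAdd A ht (ht.inter hs) Set.inter_subset_left
  rw [Set.diff_self_inter, h2, add_zero] at e2
  rw [e1, e2, Set.inter_comm]

lemma aux8_interY (A : POVM Ω H) (g : ℕ → Ω)
    (hAnull : ∀ s, MeasurableSet s → (∀ k, g k ∉ s) → A.toFun s = 0)
    (Y : ℕ → Set Ω) (hYmeas : ∀ n, MeasurableSet (Y n))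
    (hYtrace : ∀ n m, g m ∈ Y n → aux8Equiv (g m) (g n))
    {s : Set Ω} {p : ℕ} (hs : MeasurableSet s) (hgs : g p ∈ s) :
    A.toFun (s ∩ Y p) = A.toFun (Y p) := by
  refine aux8_traceEq A g hAnull (hs.inter (hYmeas p)) (hYmeas p) (fun k => ?_)
  constructor
  · exact fun hk => hk.2
  · intro hk
    exact ⟨((hYtrace p k hk) s hs).2 hgs, hk⟩

/-- Perturbation of a POVM by a jump of size `F` between two points. -/
noncomputable def aux8MkAtomic (A : POVM Ω H) (x y : Ω) (F : H →L[ℂ] H) (hF : F.IsPositive)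
    (hkey : ∀ s : Set Ω, MeasurableSet s → y ∈ s → (A.toFun s - F).IsPositive) : POVM Ω H where
  toFun s := if MeasurableSet s then
      A.toFun s + (((if x ∈ s then (1:ℂ) else 0) - (if y ∈ s then 1 else 0)) • F) else 0
  isPositive' s := by
    by_cases hs : MeasurableSet s
    · rw [if_pos hs]
      by_cases hx : x ∈ s <;> by_cases hy : y ∈ s
      · simp only [if_pos hx, if_pos hy, sub_self, zero_smul, add_zero]
        exact A.isPositive' s
      · simp only [if_pos hx, if_neg hy, sub_zero, one_smul]
        exact (A.isPositive' s).add hF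
      · simp only [if_neg hx, if_pos hy, zero_sub, neg_smul, one_smul]
        have h := hkey s hs hy
        rwa [sub_eq_add_neg] at h
      · simp only [if_neg hx, if_neg hy, sub_self, zero_smul, add_zero]
        exact A.isPositive' s
    · rw [if_neg hs]
      exact ContinuousLinearMap.isPositive_zero
  empty' := by
    rw [if_pos MeasurableSet.empty]
    simp [A.empty']
  total' := by
    rw [if_pos MeasurableSet.univ]
    simp [A.total']
  not_measurable' s hs := by rw [if_neg hs]
  m_iUnion' f hf hd v := by
    simp only [if_pos (hf _), if_pos (MeasurableSet.iUnion hf),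
      ContinuousLinearMap.add_apply, ContinuousLinearMap.smul_apply]
    refine HasSum.add (A.m_iUnion' f hf hd v) ?_
    have hgen : ∀ z : Ω, HasSum (fun k => (if z ∈ f k then (1:ℂ) else 0) • F v)
        ((if z ∈ ⋃ n, f n then (1:ℂ) else 0) • F v) := by
      intro z
      by_cases hz : z ∈ ⋃ n, f n
      · obtain ⟨k₀, hk₀⟩ := Set.mem_iUnion.1 hz
        rw [if_pos hz]
        have heq : (fun k => (if z ∈ f k then (1:ℂ) else 0) • F v)
            = fun k => if k = k₀ then (1:ℂ) • F v else 0 := by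
          funext k
          by_cases hk : k = k₀
          · subst hk; rw [if_pos hk₀, if_pos rfl]
          · rw [if_neg hk, if_neg, zero_smul]
            exact fun hzk => (Set.disjoint_left.1 (hd hk)) hzk hk₀
        rw [heq]
        exact hasSum_ite_eq k₀ _
      · rw [if_neg hz, zero_smul]
        have heq : (fun k => (if z ∈ f k then (1:ℂ) else 0) • F v) = fun _ => (0:H) := by
          funext k
          rw [if_neg, zero_smul]
          exact fun hzk => hz (Set.mem_iUnion.2 ⟨k, hzk⟩)
        rw [heq]
        exact hasSum_zero
    have h2 := (hgen x).sub (hgen y)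
    simpa [sub_smul] using h2

lemma aux8MkAtomic_toFun (A : POVM Ω H) (x y : Ω) (F : H →L[ℂ] H) (hF : F.IsPositive)
    (hkey : ∀ s : Set Ω, MeasurableSet s → y ∈ s → (A.toFun s - F).IsPositive) (s : Set Ω) :
    (aux8MkAtomic A x y F hF hkey).toFun s = if MeasurableSet s then
      A.toFun s + (((if x ∈ s then (1:ℂ) else 0) - (if y ∈ s then 1 else 0)) • F) else 0 := rfl

end Aux8B

section Aux8C

open Classical

variable {Ω Ωb : Type*} [MeasurableSpace Ω] [MeasurableSpace Ωb]
variable {H : Type*} [NormedAddCommGroup H] [InnerProductSpace ℂ H] [CompleteSpace H]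

/-- The atomic lemma: witnesses of effects of inequivalent atoms are `M`-essentially disjoint. -/
lemma aux8_atomic (A : POVM Ω H) (hext : A.Extreme) (M : POVM Ωb H) (g : ℕ → Ω)
    (hAnull : ∀ s, MeasurableSet s → (∀ k, g k ∉ s) → A.toFun s = 0)
    (Y : ℕ → Set Ω) (hYmeas : ∀ n, MeasurableSet (Y n))
    (hYself : ∀ n, g n ∈ Y n)
    (hYtrace : ∀ n m, g m ∈ Y n → aux8Equiv (g m) (g n))
    (U : ℕ → Set Ωb) (hUmeas : ∀ n, MeasurableSet (U n))
    (hUval : ∀ n, M.toFun (U n) = A.toFun (Y n))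
    {n m : ℕ} (hnm : ¬ aux8Equiv (g n) (g m)) :
    M.toFun (U n ∩ U m) = 0 := by
  have hkeyGen : ∀ (p q : ℕ) (s : Set Ω), MeasurableSet s → g p ∈ s →
      (A.toFun s - M.toFun (U p ∩ U q)).IsPositive := by
    intro p q s hs hgs
    have h1 := aux8_diffAdd A hs (hs.inter (hYmeas p)) Set.inter_subset_left
    rw [Set.diff_self_inter] at h1
    have h2 : A.toFun (s ∩ Y p) = A.toFun (Y p) :=
      aux8_interY A g hAnull Y hYmeas hYtrace hs hgs
    have h3 := aux8_diffAdd M (hUmeas p) ((hUmeas p).inter (hUmeas q)) Set.inter_subset_left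
    have h4 : A.toFun s - M.toFun (U p ∩ U q)
        = M.toFun (U p \ (U p ∩ U q)) + A.toFun (s \ Y p) := by
      rw [h1, h2, ← hUval p, h3]; abel
    rw [h4]
    exact (M.isPositive' _).add (A.isPositive' _)
  set F := M.toFun (U n ∩ U m) with hFdef
  have hF : F.IsPositive := M.isPositive' _
  have hk1 : ∀ s, MeasurableSet s → g m ∈ s → (A.toFun s - F).IsPositive := by
    intro s hs h
    have := hkeyGen m n s hs h
    rwa [Set.inter_comm, ← hFdef] at this
  have hk2 : ∀ s, MeasurableSet s → g n ∈ s → (A.toFun s - F).IsPositive :=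
    fun s hs h => hkeyGen n m s hs h
  have hcomb : ∀ s, A.toFun s = ((1/2 : ℝ) : ℂ) • (aux8MkAtomic A (g n) (g m) F hF hk1).toFun s
      + ((1 - (1/2) : ℝ) : ℂ) • (aux8MkAtomic A (g m) (g n) F hF hk2).toFun s := by
    intro s
    have hhalf : (((1:ℝ) - (1/2:ℝ) : ℝ) : ℂ) = ((1/2:ℝ):ℂ) := by norm_num
    rw [hhalf, aux8MkAtomic_toFun, aux8MkAtomic_toFun]
    by_cases hs : MeasurableSet s
    · rw [if_pos hs, if_pos hs]
      set c := (if g n ∈ s then (1:ℂ) else 0) - (if g m ∈ s then 1 else 0) with hc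
      have hc2 : (if g m ∈ s then (1:ℂ) else 0) - (if g n ∈ s then 1 else 0) = -c := by
        rw [hc, neg_sub]
      rw [hc2]
      have hsum : (A.toFun s + c • F) + (A.toFun s + (-c) • F) = A.toFun s + A.toFun s := by
        rw [neg_smul]; abel
      have key : ((1/2:ℝ):ℂ) • (A.toFun s + c • F) + ((1/2:ℝ):ℂ) • (A.toFun s + (-c) • F)
          = A.toFun s := by
        rw [← smul_add, hsum, ← two_smul ℂ (A.toFun s), smul_smul]
        norm_num
      exact key.symm
    · rw [if_neg hs, if_neg hs, A.not_measurable' s hs]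
      simp
  obtain ⟨hB₁, -⟩ := hext (aux8MkAtomic A (g n) (g m) F hF hk1)
    (aux8MkAtomic A (g m) (g n) F hF hk2) (1/2) (by norm_num) (by norm_num) hcomb
  have hfin := congrFun hB₁ (Y n)
  rw [aux8MkAtomic_toFun, if_pos (hYmeas n)] at hfin
  have hxn : g n ∈ Y n := hYself n
  have hym : g m ∉ Y n := fun h => hnm (aux8Equiv_symm (hYtrace n m h))
  rw [if_pos hxn, if_neg hym] at hfin
  have hF0 : ((1:ℂ) - 0) • F = 0 := add_eq_left.mp hfin
  rw [sub_zero, one_smul] at hF0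
  exact hF0

end Aux8C

section Aux8D

open Classical

variable {Ω Ωb : Type*} [MeasurableSpace Ω] [MeasurableSpace Ωb]
variable {H : Type*} [NormedAddCommGroup H] [InnerProductSpace ℂ H] [CompleteSpace H]

/-- The canonical union-of-witnesses representation reproduces `A`. -/
lemma aux8_ID (A : POVM Ω H) (M : POVM Ωb H) (g : ℕ → Ω)
    (hAnull : ∀ s, MeasurableSet s → (∀ k, g k ∉ s) → A.toFun s = 0)
    (Y : ℕ → Set Ω) (hYmeas : ∀ n, MeasurableSet (Y n))
    (hYequiv : ∀ n k, aux8Equiv (g n) (g k) → g k ∈ Y n)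
    (hYtrace : ∀ n m, g m ∈ Y n → aux8Equiv (g m) (g n))
    (sel : ℕ → Prop)
    (hseldist : ∀ a b, sel a → sel b → a ≠ b → ¬ aux8Equiv (g a) (g b))
    (hcover : ∀ k, ∃ n, sel n ∧ aux8Equiv (g n) (g k))
    (U : ℕ → Set Ωb) (hUmeas : ∀ n, MeasurableSet (U n))
    (hUval : ∀ n, M.toFun (U n) = A.toFun (Y n))
    (hAL : ∀ a b, ¬ aux8Equiv (g a) (g b) → M.toFun (U a ∩ U b) = 0)
    (V : Set Ω → Set Ωb)
    (hVmem : ∀ S (y : Ωb), y ∈ V S ↔ ∃ n, (sel n ∧ g n ∈ S) ∧ y ∈ U n)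
    {S : Set Ω} (hS : MeasurableSet S) : M.toFun (V S) = A.toFun S := by
  set W : ℕ → Set Ωb := fun n => if sel n ∧ g n ∈ S then U n else ∅ with hW
  have hWmeas : ∀ n, MeasurableSet (W n) := by
    intro n
    by_cases hp : sel n ∧ g n ∈ S
    · rw [hW]; simp only [if_pos hp]; exact hUmeas n
    · rw [hW]; simp only [if_neg hp]; exact MeasurableSet.empty
  have hWun : (⋃ n, W n) = V S := by
    ext y
    simp only [Set.mem_iUnion, hVmem]
    constructor
    · rintro ⟨k, hk⟩
      by_cases hp : sel k ∧ g k ∈ S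
      · rw [hW] at hk; simp only [if_pos hp] at hk; exact ⟨k, hp, hk⟩
      · rw [hW] at hk; simp only [if_neg hp] at hk; cases hk
    · rintro ⟨k, hp, hk⟩
      refine ⟨k, ?_⟩
      rw [hW]; simp only [if_pos hp]; exact hk
  have hWnull : ∀ a b, a ≠ b → M.toFun (W a ∩ W b) = 0 := by
    intro a b hab
    by_cases hpa : sel a ∧ g a ∈ S
    · by_cases hpb : sel b ∧ g b ∈ S
      · rw [hW]; simp only [if_pos hpa, if_pos hpb]
        exact hAL a b (hseldist a b hpa.1 hpb.1 hab)
      · rw [hW]; simp only [if_neg hpb, Set.inter_empty]; exact M.empty'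
    · rw [hW]; simp only [if_neg hpa, Set.empty_inter]; exact M.empty'
  have h1 : ∀ x, HasSum (fun k => M.toFun (W k) x) (M.toFun (V S) x) := by
    intro x
    have := aux8_hasSum_of_pairwise_null M W hWmeas hWnull x
    rwa [hWun] at this
  have h2 : ∀ k, M.toFun (W k) = if sel k ∧ g k ∈ S then A.toFun (Y k) else 0 := by
    intro k
    by_cases hp : sel k ∧ g k ∈ S
    · rw [hW]; simp only [if_pos hp]; exact hUval k
    · rw [hW]; simp only [if_neg hp]; exact M.empty'
  set Yc : ℕ → Set Ω := fun k => if sel k ∧ g k ∈ S then Y k ∩ S else ∅ with hYc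
  have hYcmeas : ∀ k, MeasurableSet (Yc k) := by
    intro k
    by_cases hp : sel k ∧ g k ∈ S
    · rw [hYc]; simp only [if_pos hp]; exact (hYmeas k).inter hS
    · rw [hYc]; simp only [if_neg hp]; exact MeasurableSet.empty
  have hYcsubS : ∀ k, Yc k ⊆ S := by
    intro k
    by_cases hp : sel k ∧ g k ∈ S
    · rw [hYc]; simp only [if_pos hp]; exact Set.inter_subset_right
    · rw [hYc]; simp only [if_neg hp]; exact Set.empty_subset S
  have h3 : ∀ x, HasSum (fun k => A.toFun (disjointed Yc k) x) (A.toFun (⋃ k, Yc k) x) := by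
    intro x
    have := A.m_iUnion' (disjointed Yc) (MeasurableSet.disjointed hYcmeas)
      (disjoint_disjointed Yc) x
    rwa [iUnion_disjointed] at this
  have h4 : ∀ k, A.toFun (disjointed Yc k) = if sel k ∧ g k ∈ S then A.toFun (Y k) else 0 := by
    intro k
    by_cases hp : sel k ∧ g k ∈ S
    · rw [if_pos hp]
      have e1 : A.toFun (disjointed Yc k) = A.toFun (Yc k) := by
        refine aux8_traceEq A g hAnull (MeasurableSet.disjointed hYcmeas k) (hYcmeas k)
          (fun l => ?_)
        constructor
        · exact fun hl => disjointed_subset Yc k hl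
        · intro hl
          have hlYS : g l ∈ Y k ∩ S := by
            rw [hYc] at hl; simpa only [if_pos hp] using hl
          have hlk : aux8Equiv (g l) (g k) := hYtrace k l hlYS.1
          rw [disjointed_eq_inter_compl]
          refine ⟨hl, ?_⟩
          simp only [Set.mem_iInter, Set.mem_compl_iff]
          intro i hik hcon
          by_cases hpi : sel i ∧ g i ∈ S
          · have hcon' : g l ∈ Y i ∩ S := by
              rw [hYc] at hcon; simpa only [if_pos hpi] using hcon
            have hli : aux8Equiv (g l) (g i) := hYtrace i l hcon'.1
            exact hseldist i k hpi.1 hp.1 (Nat.ne_of_lt hik)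
              (aux8Equiv_trans (aux8Equiv_symm hli) hlk)
          · rw [hYc] at hcon; simp only [if_neg hpi] at hcon; exact hcon
      have e2 : A.toFun (Yc k) = A.toFun (Y k) := by
        have hYck : Yc k = Y k ∩ S := by rw [hYc]; simp only [if_pos hp]
        rw [hYck]
        refine aux8_traceEq A g hAnull ((hYmeas k).inter hS) (hYmeas k) (fun l => ?_)
        constructor
        · exact fun hl => hl.1
        · intro hl
          have hlk : aux8Equiv (g l) (g k) := hYtrace k l hl
          exact ⟨hl, (hlk S hS).2 hp.2⟩
      rw [e1, e2]
    · rw [if_neg hp]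
      have hYck : Yc k = ∅ := by rw [hYc]; simp only [if_neg hp]
      have : disjointed Yc k = ∅ :=
        Set.subset_empty_iff.1 (by rw [← hYck]; exact disjointed_subset Yc k)
      rw [this, A.empty']
  have h5 : A.toFun (⋃ k, Yc k) = A.toFun S := by
    refine aux8_traceEq A g hAnull (MeasurableSet.iUnion hYcmeas) hS (fun l => ?_)
    constructor
    · rintro hl
      obtain ⟨k, hk⟩ := Set.mem_iUnion.1 hl
      exact hYcsubS k hk
    · intro hl
      obtain ⟨n₀, hseln₀, heq⟩ := hcover l
      have hgn₀S : g n₀ ∈ S := (heq S hS).2 hl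
      have hlY : g l ∈ Y n₀ := hYequiv n₀ l heq
      refine Set.mem_iUnion.2 ⟨n₀, ?_⟩
      rw [hYc]; simp only [if_pos (And.intro hseln₀ hgn₀S)]
      exact ⟨hlY, hl⟩
  ext x
  have hA : HasSum (fun k => M.toFun (W k) x) (A.toFun S x) := by
    have hfun : (fun k => A.toFun (disjointed Yc k) x) = fun k => M.toFun (W k) x := by
      funext k
      rw [h2 k, h4 k]
    have := h3 x
    rw [hfun, h5] at this
    exact this
  exact (h1 x).unique hA

/-- Witness unions of disjoint sets are `M`-essentially disjoint. -/
lemma aux8_interNull (M : POVM Ωb H) (g : ℕ → Ω) (sel : ℕ → Prop)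
    (U : ℕ → Set Ωb) (hUmeas : ∀ n, MeasurableSet (U n))
    (hAL : ∀ a b, ¬ aux8Equiv (g a) (g b) → M.toFun (U a ∩ U b) = 0)
    (V : Set Ω → Set Ωb)
    (hVmem : ∀ S (y : Ωb), y ∈ V S ↔ ∃ n, (sel n ∧ g n ∈ S) ∧ y ∈ U n)
    {S S' : Set Ω} (hS : MeasurableSet S) (hS' : MeasurableSet S')
    (hdisj : Disjoint S S') : M.toFun (V S ∩ V S') = 0 := by
  set W : ℕ → Set Ωb := fun n => if sel n ∧ g n ∈ S then U n else ∅ with hW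
  set W' : ℕ → Set Ωb := fun n => if sel n ∧ g n ∈ S' then U n else ∅ with hW'
  have hWmeas : ∀ n, MeasurableSet (W n) := by
    intro n; by_cases hp : sel n ∧ g n ∈ S
    · rw [hW]; simp only [if_pos hp]; exact hUmeas n
    · rw [hW]; simp only [if_neg hp]; exact MeasurableSet.empty
  have hW'meas : ∀ n, MeasurableSet (W' n) := by
    intro n; by_cases hp : sel n ∧ g n ∈ S'
    · rw [hW']; simp only [if_pos hp]; exact hUmeas n
    · rw [hW']; simp only [if_neg hp]; exact MeasurableSet.empty
  have hcross : ∀ a b, M.toFun (W a ∩ W' b) = 0 := by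
    intro a b
    by_cases hpa : sel a ∧ g a ∈ S
    · by_cases hpb : sel b ∧ g b ∈ S'
      · rw [hW, hW']; simp only [if_pos hpa, if_pos hpb]
        refine hAL a b (fun he => ?_)
        have : g a ∈ S' := (he S' hS').2 hpb.2
        exact Set.disjoint_left.1 hdisj hpa.2 this
      · rw [hW']; simp only [if_neg hpb, Set.inter_empty]; exact M.empty'
    · rw [hW]; simp only [if_neg hpa, Set.empty_inter]; exact M.empty'
  have hVW : V S = ⋃ n, W n := by
    ext y
    simp only [Set.mem_iUnion, hVmem]
    constructor
    · rintro ⟨k, hp, hk⟩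
      refine ⟨k, ?_⟩; rw [hW]; simp only [if_pos hp]; exact hk
    · rintro ⟨k, hk⟩
      by_cases hp : sel k ∧ g k ∈ S
      · rw [hW] at hk; simp only [if_pos hp] at hk; exact ⟨k, hp, hk⟩
      · rw [hW] at hk; simp only [if_neg hp] at hk; cases hk
  have hVW' : V S' = ⋃ n, W' n := by
    ext y
    simp only [Set.mem_iUnion, hVmem]
    constructor
    · rintro ⟨k, hp, hk⟩
      refine ⟨k, ?_⟩; rw [hW']; simp only [if_pos hp]; exact hk
    · rintro ⟨k, hk⟩
      by_cases hp : sel k ∧ g k ∈ S'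
      · rw [hW'] at hk; simp only [if_pos hp] at hk; exact ⟨k, hp, hk⟩
      · rw [hW'] at hk; simp only [if_neg hp] at hk; cases hk
  rw [hVW, hVW', Set.iUnion_inter]
  refine aux8_null_iUnion M _ (fun n => (hWmeas n).inter (MeasurableSet.iUnion hW'meas))
    (fun n => ?_)
  rw [Set.inter_iUnion]
  exact aux8_null_iUnion M _ (fun b => (hWmeas n).inter (hW'meas b)) (fun b => hcross n b)

end Aux8D

section Aux8E

open Classical

variable {Ω Ωb : Type*} [MeasurableSpace Ω] [MeasurableSpace Ωb]
variable {H : Type*} [NormedAddCommGroup H] [InnerProductSpace ℂ H] [CompleteSpace H]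

/-- The main lemma: any witness of `A S` in `M` is `M`-essentially contained in `V S`. -/
lemma aux8_ML (A : POVM Ω H) (hext : A.Extreme) (M : POVM Ωb H)
    (V : Set Ω → Set Ωb) (hVmeas : ∀ S, MeasurableSet (V S))
    (hVempty : V ∅ = ∅)
    (hVUnion : ∀ f : ℕ → Set Ω, V (⋃ k, f k) = ⋃ k, V (f k))
    (hID : ∀ S, MeasurableSet S → M.toFun (V S) = A.toFun S)
    (hIN : ∀ S S', MeasurableSet S → MeasurableSet S' → Disjoint S S' →
      M.toFun (V S ∩ V S') = 0)
    {S : Set Ω} {Zs : Set Ωb} (hS : MeasurableSet S) (hZs : MeasurableSet Zs)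
    (hMZ : M.toFun Zs = A.toFun S) : M.toFun (Zs \ V S) = 0 := by
  -- some common facts
  have hVu : M.toFun (V Set.univ) = 1 := by
    rw [hID Set.univ MeasurableSet.univ, A.total']
  have hcompl : M.toFun (Set.univ \ V Set.univ) = 0 := by
    have h := aux8_diffAdd M (a := Set.univ) (b := V Set.univ) MeasurableSet.univ (hVmeas _)
      (Set.subset_univ (V Set.univ))
    rw [M.total', hVu] at h
    exact (left_eq_add.mp h)
  have h6 : M.toFun (Zs \ V Set.univ) = 0 :=
    aux8_null_subset M (MeasurableSet.univ.diff (hVmeas _)) (hZs.diff (hVmeas _))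
      (fun y hy => ⟨Set.mem_univ y, hy.2⟩) hcompl
  have h7 : M.toFun (V Set.univ ∩ Zs) = A.toFun S := by
    have h := aux8_diffAdd M (a := Zs) (b := Zs ∩ V Set.univ) hZs
      (hZs.inter (hVmeas Set.univ)) Set.inter_subset_left
    rw [Set.diff_self_inter, h6, add_zero, hMZ] at h
    rw [Set.inter_comm]
    exact h.symm
  -- the two perturbed POVMs
  have hBex : ∃ B : POVM Ω H, B.toFun
      = fun s => if MeasurableSet s then A.toFun (s \ S) + M.toFun (V s ∩ Zs) else 0 := by
    refine ⟨⟨fun s => if MeasurableSet s then A.toFun (s \ S) + M.toFun (V s ∩ Zs) else 0,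
      ?_, ?_, ?_, ?_, ?_⟩, rfl⟩
    · intro s
      by_cases hs : MeasurableSet s
      · rw [if_pos hs]; exact (A.isPositive' _).add (M.isPositive' _)
      · rw [if_neg hs]; exact ContinuousLinearMap.isPositive_zero
    · rw [if_pos MeasurableSet.empty, Set.empty_diff, hVempty, Set.empty_inter,
        A.empty', M.empty', add_zero]
    · rw [if_pos MeasurableSet.univ, h7]
      have h8 := aux8_diffAdd A MeasurableSet.univ hS (Set.subset_univ S)
      rw [A.total'] at h8
      rw [h8]
      exact add_comm _ _
    · intro s hs; rw [if_neg hs]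
    · intro f hf hd x
      rw [if_pos (MeasurableSet.iUnion hf)]
      simp only [if_pos (hf _), ContinuousLinearMap.add_apply]
      refine HasSum.add ?_ ?_
      · have hd' : Pairwise (Function.onFun Disjoint fun k => f k \ S) :=
          fun a b hab => (hd hab).mono Set.diff_subset Set.diff_subset
        have h9 := A.m_iUnion' (fun k => f k \ S) (fun k => (hf k).diff hS) hd' x
        rw [Set.iUnion_diff]
        exact h9
      · have hpn : ∀ a b, a ≠ b → M.toFun ((V (f a) ∩ Zs) ∩ (V (f b) ∩ Zs)) = 0 := by
          intro a b hab
          refine aux8_null_subset M ((hVmeas _).inter (hVmeas _))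
            (((hVmeas _).inter hZs).inter ((hVmeas _).inter hZs))
            (fun y hy => ⟨hy.1.1, hy.2.1⟩) (hIN (f a) (f b) (hf a) (hf b) (hd hab))
        have h10 := aux8_hasSum_of_pairwise_null M (fun k => V (f k) ∩ Zs)
          (fun k => (hVmeas _).inter hZs) hpn x
        have hun : (⋃ k, V (f k) ∩ Zs) = V (⋃ k, f k) ∩ Zs := by
          rw [hVUnion f, Set.iUnion_inter]
        rwa [hun] at h10
  have hCex : ∃ C : POVM Ω H, C.toFun
      = fun s => if MeasurableSet s then A.toFun (s ∩ S) + M.toFun (V s \ Zs) else 0 := by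
    refine ⟨⟨fun s => if MeasurableSet s then A.toFun (s ∩ S) + M.toFun (V s \ Zs) else 0,
      ?_, ?_, ?_, ?_, ?_⟩, rfl⟩
    · intro s
      by_cases hs : MeasurableSet s
      · rw [if_pos hs]; exact (A.isPositive' _).add (M.isPositive' _)
      · rw [if_neg hs]; exact ContinuousLinearMap.isPositive_zero
    · rw [if_pos MeasurableSet.empty, Set.empty_inter, hVempty, Set.empty_diff,
        A.empty', M.empty', add_zero]
    · rw [if_pos MeasurableSet.univ, Set.univ_inter]
      have h9 := aux8_diffAdd M (a := V Set.univ) (b := V Set.univ ∩ Zs) (hVmeas Set.univ)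
        ((hVmeas Set.univ).inter hZs) Set.inter_subset_left
      rw [Set.diff_self_inter, hVu, h7] at h9
      exact h9.symm
    · intro s hs; rw [if_neg hs]
    · intro f hf hd x
      rw [if_pos (MeasurableSet.iUnion hf)]
      simp only [if_pos (hf _), ContinuousLinearMap.add_apply]
      refine HasSum.add ?_ ?_
      · have hd' : Pairwise (Function.onFun Disjoint fun k => f k ∩ S) :=
          fun a b hab => (hd hab).mono Set.inter_subset_left Set.inter_subset_left
        have h9 := A.m_iUnion' (fun k => f k ∩ S) (fun k => (hf k).inter hS) hd' x
        rw [Set.iUnion_inter]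
        exact h9
      · have hpn : ∀ a b, a ≠ b → M.toFun ((V (f a) \ Zs) ∩ (V (f b) \ Zs)) = 0 := by
          intro a b hab
          refine aux8_null_subset M ((hVmeas _).inter (hVmeas _))
            (((hVmeas _).diff hZs).inter ((hVmeas _).diff hZs))
            (fun y hy => ⟨hy.1.1, hy.2.1⟩) (hIN (f a) (f b) (hf a) (hf b) (hd hab))
        have h10 := aux8_hasSum_of_pairwise_null M (fun k => V (f k) \ Zs)
          (fun k => (hVmeas _).diff hZs) hpn x
        have hun : (⋃ k, V (f k) \ Zs) = V (⋃ k, f k) \ Zs := by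
          rw [hVUnion f, Set.iUnion_diff]
        rwa [hun] at h10
  obtain ⟨B, hB⟩ := hBex
  obtain ⟨C, hC⟩ := hCex
  have hcomb : ∀ s, A.toFun s = ((1/2 : ℝ) : ℂ) • B.toFun s
      + ((1 - (1/2) : ℝ) : ℂ) • C.toFun s := by
    intro s
    have hhalf : (((1:ℝ) - (1/2:ℝ) : ℝ) : ℂ) = ((1/2:ℝ):ℂ) := by norm_num
    rw [hhalf, hB, hC]
    by_cases hs : MeasurableSet s
    · simp only [if_pos hs]
      have e1 : A.toFun (s \ S) + A.toFun (s ∩ S) = A.toFun s := by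
        have h := aux8_diffAdd A hs (hs.inter hS) Set.inter_subset_left
        rw [Set.diff_self_inter] at h
        rw [h]
        exact add_comm _ _
      have e2 : M.toFun (V s ∩ Zs) + M.toFun (V s \ Zs) = A.toFun s := by
        have h := aux8_diffAdd M (hVmeas s) ((hVmeas s).inter hZs) Set.inter_subset_left
        rw [Set.diff_self_inter] at h
        rw [← h, hID s hs]
      have hsum : (A.toFun (s \ S) + M.toFun (V s ∩ Zs))
          + (A.toFun (s ∩ S) + M.toFun (V s \ Zs)) = A.toFun s + A.toFun s := by
        calc (A.toFun (s \ S) + M.toFun (V s ∩ Zs))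
            + (A.toFun (s ∩ S) + M.toFun (V s \ Zs))
            = (A.toFun (s \ S) + A.toFun (s ∩ S))
              + (M.toFun (V s ∩ Zs) + M.toFun (V s \ Zs)) := by abel
          _ = A.toFun s + A.toFun s := by rw [e1, e2]
      have key : ((1/2:ℝ):ℂ) • (A.toFun (s \ S) + M.toFun (V s ∩ Zs))
          + ((1/2:ℝ):ℂ) • (A.toFun (s ∩ S) + M.toFun (V s \ Zs)) = A.toFun s := by
        rw [← smul_add, hsum, ← two_smul ℂ (A.toFun s), smul_smul]
        norm_num
      exact key.symm
    · simp only [if_neg hs, A.not_measurable' s hs]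
      simp
  obtain ⟨hBA, -⟩ := hext B C (1/2) (by norm_num) (by norm_num) hcomb
  have hfin := congrFun hBA S
  rw [hB] at hfin
  simp only [if_pos hS, Set.diff_self, A.empty', zero_add] at hfin
  -- hfin : M.toFun (V S ∩ Zs) = A.toFun S
  have h10 := aux8_diffAdd M hZs (hZs.inter (hVmeas S)) Set.inter_subset_left
  rw [Set.diff_self_inter] at h10
  rw [Set.inter_comm (V S) Zs] at hfin
  rw [hfin, ← hMZ] at h10
  exact (left_eq_add.mp h10)

end Aux8E

/-- Let `A` be an extreme discrete POVM on `(Ω,Σ)` with effects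
`Aᵢ = A(Xᵢ)` for disjoint measurable sets `Xᵢ`, with minimal Naimark dilation `(K,P,J)`.
If `M` is a POVM on `(Ω̄,Σ̄)` with `ran A ⊆ ran M`, witnessed by `M(Zᵢ) = Aᵢ`, then
`M(Zᵢ ∩ Zⱼ) = 0` for all `i ≠ j` with `Aᵢ ≠ 0 ≠ Aⱼ`. -/
theorem extreme_discrete_disjoint_supports
    {K : Type*} [NormedAddCommGroup K] [InnerProductSpace ℂ K] [CompleteSpace K]
    (A : POVM Ω H) (hdisc : A.Discrete) (hext : A.Extreme)
    (P : POVM Ω K) (hP : P.IsSharp) (J : H →L[ℂ] K)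
    (hJ : ∀ x : H, ‖J x‖ = ‖x‖)
    (hdil : ∀ X, A.toFun X = (ContinuousLinearMap.adjoint J) ∘L P.toFun X ∘L J)
    (hmin : Dense (Submodule.span ℂ {y : K | ∃ (X : Set Ω) (φ : H), y = P.toFun X (J φ)} : Set K))
    (X : ℕ → Set Ω) (hXmeas : ∀ i, MeasurableSet (X i)) (hXdisj : Pairwise (Function.onFun Disjoint X))
    (M : POVM Ωb H) (hran : RanSubset A M)
    (Z : ℕ → Set Ωb) (hZmeas : ∀ i, MeasurableSet (Z i))
    (hMZ : ∀ i, M.toFun (Z i) = A.toFun (X i)) :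
    ∀ i j, i ≠ j → A.toFun (X i) ≠ 0 → A.toFun (X j) ≠ 0 →
      M.toFun (Z i ∩ Z j) = 0 := by
  classical
  intro i j hij hAi hAj
  obtain ⟨D₀, hD₀c, hD₀null⟩ := hdisc
  have hD₀ne : D₀.Nonempty := by
    rcases Set.eq_empty_or_nonempty D₀ with h | h
    · exact absurd (hD₀null (X i) (hXmeas i) (by rw [h]; exact Set.inter_empty _)) hAi
    · exact h
  obtain ⟨g, hg⟩ := hD₀c.exists_eq_range hD₀ne
  have hAnull : ∀ s, MeasurableSet s → (∀ k, g k ∉ s) → A.toFun s = 0 := by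
    intro s hs hks
    refine hD₀null s hs ?_
    ext y
    simp only [Set.mem_inter_iff, Set.mem_empty_iff_false, iff_false, not_and]
    intro hys hyD
    rw [hg] at hyD
    obtain ⟨k, rfl⟩ := hyD
    exact hks k hys
  have hYex : ∃ Y : ℕ → Set Ω, (∀ n, MeasurableSet (Y n)) ∧ (∀ n, g n ∈ Y n) ∧
      (∀ n k, aux8Equiv (g n) (g k) → g k ∈ Y n) ∧
      (∀ n m, g m ∈ Y n → aux8Equiv (g m) (g n)) := by
    have hsep : ∀ m n : ℕ, ¬ aux8Equiv (g m) (g n) →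
        ∃ s : Set Ω, MeasurableSet s ∧ g n ∈ s ∧ g m ∉ s := fun m n h => aux8_exists_sep h
    refine ⟨fun n => ⋂ m, if h : ¬ aux8Equiv (g m) (g n) then (hsep m n h).choose else Set.univ,
      ?_, ?_, ?_, ?_⟩
    · intro n
      refine MeasurableSet.iInter (fun m => ?_)
      by_cases h : ¬ aux8Equiv (g m) (g n)
      · rw [dif_pos h]; exact (hsep m n h).choose_spec.1
      · rw [dif_neg h]; exact MeasurableSet.univ
    · intro n
      refine Set.mem_iInter.2 (fun m => ?_)
      by_cases h : ¬ aux8Equiv (g m) (g n)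
      · rw [dif_pos h]; exact (hsep m n h).choose_spec.2.1
      · rw [dif_neg h]; exact Set.mem_univ _
    · intro n k he
      refine Set.mem_iInter.2 (fun m => ?_)
      by_cases h : ¬ aux8Equiv (g m) (g n)
      · rw [dif_pos h]
        obtain ⟨hm1, hm2, -⟩ := (hsep m n h).choose_spec
        exact (he _ hm1).1 hm2
      · rw [dif_neg h]; exact Set.mem_univ _
    · intro n m hm
      by_contra h
      have hmem := Set.mem_iInter.1 hm m
      rw [dif_pos h] at hmem
      exact (hsep m n h).choose_spec.2.2 hmem
  obtain ⟨Y, hYmeas, hYself, hYequiv, hYtrace⟩ := hYex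
  set sel : ℕ → Prop := fun n => ∀ m, m < n → ¬ aux8Equiv (g m) (g n) with hseldef
  have hseldist : ∀ a b, sel a → sel b → a ≠ b → ¬ aux8Equiv (g a) (g b) := by
    intro a b hsa hsb hab
    rcases Nat.lt_or_ge a b with h | h
    · exact hsb a h
    · have h' : b < a := lt_of_le_of_ne h (Ne.symm hab)
      exact fun he => hsa b h' (aux8Equiv_symm he)
  have hcover : ∀ k, ∃ n, sel n ∧ aux8Equiv (g n) (g k) := by
    intro k
    have hex : ∃ m, aux8Equiv (g m) (g k) := ⟨k, aux8Equiv_refl _⟩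
    refine ⟨Nat.find hex, ?_, Nat.find_spec hex⟩
    intro m hm he
    exact Nat.find_min hex hm (aux8Equiv_trans he (Nat.find_spec hex))
  choose U hUmeas hUval using fun n => hran (Y n) (hYmeas n)
  have hVex : ∃ V : Set Ω → Set Ωb, (∀ S, MeasurableSet (V S)) ∧
      (∀ S (y : Ωb), y ∈ V S ↔ ∃ n, (sel n ∧ g n ∈ S) ∧ y ∈ U n) := by
    refine ⟨fun S => ⋃ n, if sel n ∧ g n ∈ S then U n else ∅, fun S => ?_, fun S y => ?_⟩
    · refine MeasurableSet.iUnion (fun n => ?_)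
      by_cases hp : sel n ∧ g n ∈ S
      · rw [if_pos hp]; exact hUmeas n
      · rw [if_neg hp]; exact MeasurableSet.empty
    · simp only [Set.mem_iUnion]
      constructor
      · rintro ⟨n, hn⟩
        by_cases hp : sel n ∧ g n ∈ S
        · rw [if_pos hp] at hn; exact ⟨n, hp, hn⟩
        · rw [if_neg hp] at hn; cases hn
      · rintro ⟨n, hp, hn⟩
        exact ⟨n, by rw [if_pos hp]; exact hn⟩
  obtain ⟨V, hVmeas, hVmem⟩ := hVex
  have hVempty : V ∅ = ∅ := by
    ext y
    rw [hVmem]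
    simp
  have hVUnion : ∀ f : ℕ → Set Ω, V (⋃ k, f k) = ⋃ k, V (f k) := by
    intro f
    ext y
    simp only [hVmem, Set.mem_iUnion]
    constructor
    · rintro ⟨n, ⟨hsn, hgn⟩, hyn⟩
      obtain ⟨k, hk⟩ := hgn
      exact ⟨k, n, ⟨hsn, hk⟩, hyn⟩
    · rintro ⟨k, n, ⟨hsn, hk⟩, hyn⟩
      exact ⟨n, ⟨hsn, ⟨k, hk⟩⟩, hyn⟩
  have hAL : ∀ a b, ¬ aux8Equiv (g a) (g b) → M.toFun (U a ∩ U b) = 0 :=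
    fun a b hab => aux8_atomic A hext M g hAnull Y hYmeas hYself hYtrace U hUmeas hUval hab
  have hID : ∀ S, MeasurableSet S → M.toFun (V S) = A.toFun S :=
    fun S hS => aux8_ID A M g hAnull Y hYmeas hYequiv hYtrace sel hseldist hcover U hUmeas
      hUval hAL V hVmem hS
  have hIN : ∀ S S', MeasurableSet S → MeasurableSet S' → Disjoint S S' →
      M.toFun (V S ∩ V S') = 0 :=
    fun S S' hS hS' hd => aux8_interNull M g sel U hUmeas hAL V hVmem hS hS' hd
  have h1 : M.toFun (Z i \ V (X i)) = 0 :=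
    aux8_ML A hext M V hVmeas hVempty hVUnion hID hIN (hXmeas i) (hZmeas i) (hMZ i)
  have h2 : M.toFun (Z j \ V (X j)) = 0 :=
    aux8_ML A hext M V hVmeas hVempty hVUnion hID hIN (hXmeas j) (hZmeas j) (hMZ j)
  have h3 : M.toFun (V (X i) ∩ V (X j)) = 0 :=
    hIN (X i) (X j) (hXmeas i) (hXmeas j) (hXdisj hij)
  have hTnull : M.toFun ((Z i \ V (X i)) ∪ ((Z j \ V (X j)) ∪ (V (X i) ∩ V (X j)))) = 0 := by
    refine aux8_null_union M ((hZmeas i).diff (hVmeas _))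
      (((hZmeas j).diff (hVmeas _)).union ((hVmeas _).inter (hVmeas _))) h1 ?_
    exact aux8_null_union M ((hZmeas j).diff (hVmeas _)) ((hVmeas _).inter (hVmeas _)) h2 h3
  refine aux8_null_subset M (((hZmeas i).diff (hVmeas _)).union
    ((((hZmeas j).diff (hVmeas _)).union ((hVmeas _).inter (hVmeas _)))))
    ((hZmeas i).inter (hZmeas j)) ?_ hTnull
  intro y hy
  by_cases hvi : y ∈ V (X i)
  · by_cases hvj : y ∈ V (X j)
    · exact Or.inr (Or.inr ⟨hvi, hvj⟩)
    · exact Or.inr (Or.inl ⟨hy.2, hvj⟩)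
  · exact Or.inl ⟨hy.1, hvi⟩
end

section
/- Any discrete extreme POVM A on (Ω,Σ) and any POVM M on (Ω̄,Σ̄) with ran A ⊆ ran M are jointly measurable: there exists a POVM N on the product σ-algebra Σ⊗Σ̄ with N(X×Ω̄) = A(X) for all X ∈ Σ and N(Ω×Z) = M(Z) for all Z ∈ Σ̄. -/
open scoped InnerProductSpace

namespace Aux9

open ContinuousLinearMap

variable {Ω : Type*} [MeasurableSpace Ω]
variable {H : Type*} [NormedAddCommGroup H] [InnerProductSpace ℂ H] [CompleteSpace H]

lemma eq_zero_of_pos_neg {P : H →L[ℂ] H} (h1 : P.IsPositive) (h2 : (-P).IsPositive) :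
    P = 0 := by
  have h0 : (0 : H →L[ℂ] H) ≤ P := (nonneg_iff_isPositive P).2 h1
  have h0' : P ≤ (0 : H →L[ℂ] H) := (le_def P 0).2 (by simpa using h2)
  exact le_antisymm h0' h0

variable (A : POVM Ω H)

lemma add_disjoint {S T : Set Ω} (hS : MeasurableSet S) (hT : MeasurableSet T)
    (hd : Disjoint S T) : A.toFun (S ∪ T) = A.toFun S + A.toFun T := by
  classical
  set f : ℕ → Set Ω := fun n => if n = 0 then S else if n = 1 then T else ∅ with hf
  have hmeas : ∀ n, MeasurableSet (f n) := by
    intro n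
    simp only [hf]
    split_ifs <;> first | exact hS | exact hT | exact MeasurableSet.empty
  have hpd : Pairwise (Function.onFun Disjoint f) := by
    intro i j hij
    simp only [Function.onFun, hf]
    split_ifs <;>
      first
        | exact hd
        | exact hd.symm
        | exact Set.disjoint_empty _
        | exact (Set.empty_disjoint _)
        | (exfalso; omega)
  have hU : (⋃ n, f n) = S ∪ T := by
    ext y
    simp only [Set.mem_iUnion, Set.mem_union, hf]
    constructor
    · rintro ⟨n, hn⟩
      split_ifs at hn with h1 h2
      · exact Or.inl hn
      · exact Or.inr hn
      · exact absurd hn (Set.notMem_empty y)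
    · rintro (h | h)
      · exact ⟨0, by simp [h]⟩
      · exact ⟨1, by simp [h]⟩
  ext x
  have h := A.m_iUnion' f hmeas hpd x
  rw [hU] at h
  have h2 : HasSum (fun n => A.toFun (f n) x)
      (∑ b ∈ ({0, 1} : Finset ℕ), A.toFun (f b) x) := by
    apply hasSum_sum_of_ne_finset_zero
    intro n hn
    simp only [Finset.mem_insert, Finset.mem_singleton, not_or] at hn
    simp [hf, hn.1, hn.2, A.empty']
  have := h.unique h2
  rw [this, Finset.sum_pair (by norm_num)]
  simp [hf]

lemma diff_eq {S T : Set Ω} (hS : MeasurableSet S) (hT : MeasurableSet T) (hsub : S ⊆ T) :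
    A.toFun T = A.toFun S + A.toFun (T \ S) := by
  have := add_disjoint A hS (hT.diff hS) Set.disjoint_sdiff_right
  rwa [Set.union_diff_cancel hsub] at this

lemma pos_diff {S T : Set Ω} (hS : MeasurableSet S) (hT : MeasurableSet T) (hsub : S ⊆ T) :
    (A.toFun T - A.toFun S).IsPositive := by
  have h := diff_eq A hS hT hsub
  have : A.toFun T - A.toFun S = A.toFun (T \ S) := by rw [h]; abel
  rw [this]; exact A.isPositive' _

lemma mono_zero {S T : Set Ω} (hS : MeasurableSet S) (hT : MeasurableSet T) (hsub : S ⊆ T)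
    (h : A.toFun T = 0) : A.toFun S = 0 := by
  have hd := diff_eq A hS hT hsub
  rw [h] at hd
  have hneg : -(A.toFun S) = A.toFun (T \ S) := by
    rw [neg_eq_iff_add_eq_zero]; linear_combination (norm := abel) hd.symm
  exact eq_zero_of_pos_neg (A.isPositive' _) (hneg ▸ A.isPositive' _)

lemma union_zero {S T : Set Ω} (hS : MeasurableSet S) (hT : MeasurableSet T)
    (h1 : A.toFun S = 0) (h2 : A.toFun T = 0) : A.toFun (S ∪ T) = 0 := by
  have hd := diff_eq A hS (hS.union hT) Set.subset_union_left
  rw [h1, zero_add, Set.union_diff_left] at hd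
  rw [hd]
  exact mono_zero A ((hT.diff hS)) hT Set.diff_subset h2


open Classical in
lemma hasSum_indicator_point (f : ℕ → Set Ω) (hpd : Pairwise (Function.onFun Disjoint f)) (p : Ω) (v : H) :
    HasSum (fun n => if p ∈ f n then v else 0) (if p ∈ ⋃ n, f n then v else 0) := by
  classical
  by_cases h : ∃ n, p ∈ f n
  · obtain ⟨n₀, hn₀⟩ := h
    have hfun : (fun n => if p ∈ f n then v else 0) = fun n => if n = n₀ then v else 0 := by
      funext n
      by_cases hn : p ∈ f n
      · have : n = n₀ := by
          by_contra hne
          exact Set.disjoint_left.1 (hpd hne) hn hn₀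
        subst this; simp [hn]
      · have hne : n ≠ n₀ := fun he => hn (he ▸ hn₀)
        simp [hn, hne]
    rw [hfun]
    have hmem : p ∈ ⋃ n, f n := Set.mem_iUnion.2 ⟨n₀, hn₀⟩
    simpa [hmem] using hasSum_ite_eq n₀ v
  · push_neg at h
    have hmem : p ∉ ⋃ n, f n := by simpa using h
    have hfun : (fun n => if p ∈ f n then v else 0) = fun _ => (0 : H) := by
      funext n; simp [h n]
    rw [hfun]
    simpa [hmem] using hasSum_zero

open Classical in
/-- Perturbation of a POVM moving `G` of mass from the point `a` to the point `b`. -/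
noncomputable def perturb (a b : Ω) (G : H →L[ℂ] H) (hG : G.IsPositive)
    (hle : ∀ s, MeasurableSet s → a ∈ s → b ∉ s → (A.toFun s - G).IsPositive) :
    POVM Ω H where
  toFun s := A.toFun s + (if b ∈ s ∧ MeasurableSet s then G else 0)
      - (if a ∈ s ∧ MeasurableSet s then G else 0)
  isPositive' := by
    intro s
    by_cases hm : MeasurableSet s
    · by_cases ha : a ∈ s <;> by_cases hb : b ∈ s
      · simpa [ha, hb, hm] using A.isPositive' s
      · simpa [ha, hb, hm] using hle s hm ha hb
      · have : A.toFun s + G - 0 = A.toFun s + G := by abel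
        simpa [ha, hb, hm, this] using (A.isPositive' s).add hG
      · simpa [ha, hb, hm] using A.isPositive' s
    · simpa [hm, A.not_measurable' s hm] using ContinuousLinearMap.isPositive_zero
  empty' := by simp [A.empty']
  total' := by simp [A.total', MeasurableSet.univ]
  not_measurable' := by intro s hs; simp [hs, A.not_measurable' s hs]
  m_iUnion' := by
    intro f hmeas hpd x
    have hUm : MeasurableSet (⋃ n, f n) := MeasurableSet.iUnion hmeas
    have key : ∀ (p : Ω), HasSum (fun n => (if p ∈ f n ∧ MeasurableSet (f n) then G else 0) x)
        ((if p ∈ (⋃ n, f n) ∧ MeasurableSet (⋃ n, f n) then G else 0) x) := by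
      intro p
      have h1 := (hasSum_indicator_point f hpd p (G x))
      have he : (fun n => (if p ∈ f n ∧ MeasurableSet (f n) then G else 0) x)
          = fun n => if p ∈ f n then G x else 0 := by
        funext n
        by_cases hp : p ∈ f n <;> simp [hp, hmeas n]
      rw [he]
      by_cases hp : p ∈ ⋃ n, f n <;> simpa [hp, hUm] using h1
    have hA := A.m_iUnion' f hmeas hpd x
    have h2 := (hA.add (key b)).sub (key a)
    simpa only [ContinuousLinearMap.sub_apply, ContinuousLinearMap.add_apply] using h2
  

end Aux9

variable {Ω Ω' Ωb : Type*} [MeasurableSpace Ω] [MeasurableSpace Ω'] [MeasurableSpace Ωb]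
variable {H : Type*} [NormedAddCommGroup H] [InnerProductSpace ℂ H] [CompleteSpace H]

/-- Any discrete extreme POVM `A` on `(Ω,Σ)` (on a separable complex Hilbert
space) and any POVM `M` on `(Ω̄,Σ̄)` with `ran A ⊆ ran M` are jointly measurable. -/
theorem discrete_extreme_ranSubset_jointlyMeasurable
    [TopologicalSpace.SeparableSpace H] (A : POVM Ω H) (hdisc : A.Discrete) (hext : A.Extreme)
    (M : POVM Ωb H) (hran : RanSubset A M) :
    JointlyMeasurable A M := by
  classical
  obtain ⟨D, hDc, hD⟩ := hdisc
  by_cases hDne : D.Nonempty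
  swap
  · -- degenerate case: H is trivial
    have h1 : A.toFun Set.univ = 0 := by
      refine hD _ MeasurableSet.univ ?_
      rw [Set.not_nonempty_iff_eq_empty.mp hDne]; simp
    have h10 : (1 : H →L[ℂ] H) = 0 := by rw [← A.total', h1]
    have hall : ∀ T : H →L[ℂ] H, T = 0 := fun T => by
      calc T = T * 1 := (mul_one T).symm
        _ = T * 0 := by rw [h10]
        _ = 0 := mul_zero T
    refine ⟨⟨fun _ => 0, fun _ => ContinuousLinearMap.isPositive_zero, rfl, h10.symm,
        fun _ _ => rfl, ?_⟩, fun X _ => (hall _).symm, fun Y _ => (hall _).symm⟩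
    intro f _ _ x
    simpa using hasSum_zero
  obtain ⟨e, he⟩ := Set.Countable.exists_eq_range hDc hDne
  -- A vanishes on measurable sets containing no e m
  have hA0 : ∀ s : Set Ω, MeasurableSet s → (∀ m, e m ∉ s) → A.toFun s = 0 := by
    intro s hs h
    refine hD s hs ?_
    rw [he]
    ext y
    simp only [Set.mem_inter_iff, Set.mem_range, Set.mem_empty_iff_false, iff_false, not_and]
    rintro hy ⟨m, rfl⟩
    exact h m hy
  -- the measurable-indistinguishability relation
  set rel : Ω → Ω → Prop := fun u v => ∀ S : Set Ω, MeasurableSet S → (u ∈ S ↔ v ∈ S)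
    with hrel_def
  have hrel_refl : ∀ u, rel u u := fun u S _ => Iff.rfl
  have hrel_symm : ∀ u v, rel u v → rel v u := fun u v h S hS => (h S hS).symm
  have hrel_trans : ∀ u v w, rel u v → rel v w → rel u w :=
    fun u v w h1 h2 S hS => (h1 S hS).trans (h2 S hS)
  have hsep : ∀ u v, ¬ rel u v → ∃ S : Set Ω, MeasurableSet S ∧ u ∈ S ∧ v ∉ S := by
    intro u v h
    have h' : ¬ ∀ S : Set Ω, MeasurableSet S → (u ∈ S ↔ v ∈ S) := h
    push_neg at h'
    rename' h' => h
    obtain ⟨S, hS, hiff⟩ := h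
    rcases hiff with ⟨hu, hv⟩ | ⟨hu, hv⟩
    · exact ⟨S, hS, hu, hv⟩
    · exact ⟨Sᶜ, hS.compl, hu, fun hc => hc hv⟩
  -- separating measurable "atoms"
  set X : ℕ → Set Ω := fun n => ⋂ m, if h : rel (e n) (e m) then Set.univ
      else Classical.choose (hsep (e n) (e m) h) with hX_def
  have hXmeas : ∀ n, MeasurableSet (X n) := by
    intro n
    have h0 : MeasurableSet (⋂ m, if h : rel (e n) (e m) then Set.univ
        else Classical.choose (hsep (e n) (e m) h)) := by
      refine MeasurableSet.iInter fun m => ?_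
      by_cases h : rel (e n) (e m)
      · rw [dif_pos h]; exact MeasurableSet.univ
      · rw [dif_neg h]; exact (Classical.choose_spec (hsep (e n) (e m) h)).1
    simpa only [hX_def] using h0
  have hXmem : ∀ n ω, rel (e n) ω → ω ∈ X n := by
    intro n ω hrel1
    have h0 : ω ∈ ⋂ m, if h : rel (e n) (e m) then Set.univ
        else Classical.choose (hsep (e n) (e m) h) := by
      refine Set.mem_iInter.2 fun m => ?_
      by_cases h : rel (e n) (e m)
      · rw [dif_pos h]; trivial
      · rw [dif_neg h]
        obtain ⟨hSm, hu, _⟩ := Classical.choose_spec (hsep (e n) (e m) h)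
        exact (hrel1 _ hSm).1 hu
    simpa only [hX_def] using h0
  have hXrel : ∀ n m, e m ∈ X n → rel (e n) (e m) := by
    intro n m hm
    by_contra h
    obtain ⟨hSm, _, hv⟩ := Classical.choose_spec (hsep (e n) (e m) h)
    have hm' : e m ∈ ⋂ m, if h : rel (e n) (e m) then Set.univ
        else Classical.choose (hsep (e n) (e m) h) := by
      simpa only [hX_def] using hm
    have := Set.mem_iInter.1 hm' m
    rw [dif_neg h] at this
    exact hv this
  set chosen : ℕ → Prop := fun n => ∀ m, m < n → ¬ rel (e m) (e n) with hchosen_def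
  set X' : ℕ → Set Ω := fun n =>
      if chosen n then X n \ ⋃ m, ⋃ (_ : m < n), X m else ∅ with hX'_def
  have hX'meas : ∀ n, MeasurableSet (X' n) := by
    intro n
    simp only [hX'_def]
    by_cases h : chosen n
    · rw [if_pos h]
      exact (hXmeas n).diff
        (MeasurableSet.iUnion fun m => MeasurableSet.iUnion fun _ => hXmeas m)
    · rw [if_neg h]; exact MeasurableSet.empty
  have hX'sub : ∀ n, X' n ⊆ X n := by
    intro n
    simp only [hX'_def]
    by_cases h : chosen n
    · rw [if_pos h]; exact Set.diff_subset
    · rw [if_neg h]; exact Set.empty_subset _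
  have hX'rel : ∀ n m, e m ∈ X' n → rel (e n) (e m) := fun n m hm => hXrel n m (hX'sub n hm)
  have hX'pd : Pairwise (Function.onFun Disjoint X') := by
    have key : ∀ i j, i < j → Disjoint (X' i) (X' j) := by
      intro i j hij
      rw [Set.disjoint_left]
      intro ω hωi hωj
      have h1 : ω ∈ X i := hX'sub i hωi
      simp only [hX'_def] at hωj
      by_cases h : chosen j
      · rw [if_pos h] at hωj
        exact hωj.2 (Set.mem_iUnion.2 ⟨i, Set.mem_iUnion.2 ⟨hij, h1⟩⟩)
      · rw [if_neg h] at hωj; exact hωj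
    intro i j hij
    rcases lt_or_gt_of_ne hij with h | h
    · exact key i j h
    · exact (key j i h).symm
  have hX'mem : ∀ n, chosen n → e n ∈ X' n := by
    intro n hn
    simp only [hX'_def]
    rw [if_pos hn]
    refine ⟨hXmem n (e n) (hrel_refl _), ?_⟩
    rw [Set.mem_iUnion]
    rintro ⟨m, hm⟩
    rw [Set.mem_iUnion] at hm
    obtain ⟨hmn, hmem⟩ := hm
    exact hn m hmn (hXrel m n hmem)
  have hcover : ∀ k, ∃ n, chosen n ∧ e k ∈ X' n := by
    intro k
    have hex : ∃ n, rel (e n) (e k) := ⟨k, hrel_refl _⟩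
    set n := Nat.find hex with hn_def
    have hrelnk : rel (e n) (e k) := Nat.find_spec hex
    have hmin : ∀ m, m < n → ¬ rel (e m) (e k) := fun m hm => Nat.find_min hex hm
    have hch : chosen n := by
      intro m hmn hrel
      exact hmin m hmn (hrel_trans _ _ _ hrel hrelnk)
    refine ⟨n, hch, ?_⟩
    simp only [hX'_def]
    rw [if_pos hch]
    refine ⟨hXmem n (e k) hrelnk, ?_⟩
    rw [Set.mem_iUnion]
    rintro ⟨m, hm⟩
    rw [Set.mem_iUnion] at hm
    obtain ⟨hmn, hmem⟩ := hm
    exact hmin m hmn (hXrel m k hmem)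
  -- A only sees which e m's are in a set
  have hAeq : ∀ S T : Set Ω, MeasurableSet S → MeasurableSet T →
      (∀ m, e m ∈ S ↔ e m ∈ T) → A.toFun S = A.toFun T := by
    intro S T hS hT hiff
    have hST : A.toFun (S \ T) = 0 := hA0 _ (hS.diff hT) fun m hm =>
      hm.2 ((hiff m).1 hm.1)
    have hTS : A.toFun (T \ S) = 0 := hA0 _ (hT.diff hS) fun m hm =>
      hm.2 ((hiff m).2 hm.1)
    have h1 := Aux9.diff_eq A (hS.inter hT) hS Set.inter_subset_left
    have h2 := Aux9.diff_eq A (hT.inter hS) hT Set.inter_subset_left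
    rw [Set.diff_self_inter] at h1 h2
    rw [Set.inter_comm] at h2
    rw [h1, h2, hST, hTS]
  choose Z hZmeas hZM using fun n => hran (X' n) (hX'meas n)
  have hMZZ : ∀ j k, j ≠ k → M.toFun (Z j ∩ Z k) = 0 := by
    intro j k hjk
    have hGpos : (M.toFun (Z j ∩ Z k)).IsPositive := M.isPositive' _
    have hGmeas : MeasurableSet (Z j ∩ Z k) := (hZmeas j).inter (hZmeas k)
    by_cases hcj : chosen j
    swap
    · have hXj : X' j = ∅ := by simp only [hX'_def]; rw [if_neg hcj]
      have hMj : M.toFun (Z j) = 0 := by rw [hZM j, hXj, A.empty']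
      exact Aux9.mono_zero M hGmeas (hZmeas j) Set.inter_subset_left hMj
    by_cases hck : chosen k
    swap
    · have hXk : X' k = ∅ := by simp only [hX'_def]; rw [if_neg hck]
      have hMk : M.toFun (Z k) = 0 := by rw [hZM k, hXk, A.empty']
      exact Aux9.mono_zero M hGmeas (hZmeas k) Set.inter_subset_right hMk
    set G := M.toFun (Z j ∩ Z k) with hG_def
    have hGle : ∀ i : ℕ, Z j ∩ Z k ⊆ Z i → ∀ s, MeasurableSet s → e i ∈ s →
        (A.toFun s - G).IsPositive := by
      intro i hsub s hs hi
      have h1 : A.toFun (s ∩ X' i) = A.toFun (X' i) := by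
        refine hAeq _ _ (hs.inter (hX'meas i)) (hX'meas i) fun m => ?_
        refine ⟨fun hm => hm.2, fun hm => ⟨?_, hm⟩⟩
        exact ((hX'rel i m hm) s hs).1 hi
      have p1 : (A.toFun s - M.toFun (Z i)).IsPositive := by
        have h2 := Aux9.pos_diff A (hs.inter (hX'meas i)) hs Set.inter_subset_left
        rwa [h1, ← hZM i] at h2
      have p2 : (M.toFun (Z i) - G).IsPositive :=
        Aux9.pos_diff M hGmeas (hZmeas i) hsub
      have hsplit : A.toFun s - G
          = (A.toFun s - M.toFun (Z i)) + (M.toFun (Z i) - G) := by abel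
      rw [hsplit]; exact p1.add p2
    set A₁ := Aux9.perturb A (e j) (e k) G hGpos
      (fun s hs ha _ => hGle j Set.inter_subset_left s hs ha) with hA₁_def
    set A₂ := Aux9.perturb A (e k) (e j) G hGpos
      (fun s hs ha _ => hGle k Set.inter_subset_right s hs ha) with hA₂_def
    have hcvx : ∀ s, A.toFun s = ((1/2 : ℝ) : ℂ) • A₁.toFun s
        + ((1 - 1/2 : ℝ) : ℂ) • A₂.toFun s := by
      intro s
      have e1 : A₁.toFun s = A.toFun s + (if e k ∈ s ∧ MeasurableSet s then G else 0)
          - (if e j ∈ s ∧ MeasurableSet s then G else 0) := rfl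
      have e2 : A₂.toFun s = A.toFun s + (if e j ∈ s ∧ MeasurableSet s then G else 0)
          - (if e k ∈ s ∧ MeasurableSet s then G else 0) := rfl
      rw [e1, e2]
      generalize (if e k ∈ s ∧ MeasurableSet s then G else 0) = T1
      generalize (if e j ∈ s ∧ MeasurableSet s then G else 0) = T2
      have hc : ((1 - 1/2 : ℝ) : ℂ) = ((1/2 : ℝ) : ℂ) := by norm_num
      rw [hc]
      module
    obtain ⟨h1, -⟩ := hext A₁ A₂ (1/2) (by norm_num) (by norm_num) hcvx
    have hval := congrFun h1 (X' k)
    have hjk' : ¬ rel (e k) (e j) := by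
      rcases lt_or_gt_of_ne hjk with h | h
      · exact fun hr => hck j h (hrel_symm _ _ hr)
      · exact hcj k h
    have hnj : e j ∉ X' k := fun hmem => hjk' (hX'rel k j hmem)
    have e1 : A₁.toFun (X' k) = A.toFun (X' k) + G - 0 := by
      show A.toFun _ + _ - _ = _
      rw [if_pos ⟨hX'mem k hck, hX'meas k⟩, if_neg (fun hc => hnj hc.1)]
    have h2 : A.toFun (X' k) + G - 0 = A.toFun (X' k) := by rw [← e1, hval]
    rw [sub_zero] at h2
    exact add_eq_left.1 h2
  -- disjointification of the Z n
  set Z' : ℕ → Set Ωb := fun n => Z n \ ⋃ m, ⋃ (_ : m < n), Z m with hZ'_def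
  have hZ'meas : ∀ n, MeasurableSet (Z' n) := fun n =>
    (hZmeas n).diff (MeasurableSet.iUnion fun m => MeasurableSet.iUnion fun _ => hZmeas m)
  have hZ'sub : ∀ n, Z' n ⊆ Z n := fun n => Set.diff_subset
  have hnullU : ∀ (W : ℕ → Set Ωb), (∀ m, MeasurableSet (W m)) → ∀ kk,
      (∀ m, m < kk → M.toFun (W m) = 0) → M.toFun (⋃ m, ⋃ (_ : m < kk), W m) = 0 := by
    intro W hWmeas kk
    induction kk with
    | zero => intro _; simpa using M.empty'
    | succ n ih =>
      intro hnull
      rw [Set.biUnion_lt_succ]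
      exact Aux9.union_zero M
        (MeasurableSet.iUnion fun m => MeasurableSet.iUnion fun _ => hWmeas m) (hWmeas n)
        (ih fun m hm => hnull m (hm.trans (Nat.lt_succ_self n))) (hnull n (Nat.lt_succ_self n))
  have hZ'M : ∀ n, M.toFun (Z' n) = M.toFun (Z n) := by
    intro n
    have hU : MeasurableSet (⋃ m, ⋃ (_ : m < n), Z m) :=
      MeasurableSet.iUnion fun m => MeasurableSet.iUnion fun _ => hZmeas m
    have hinter : M.toFun (Z n ∩ ⋃ m, ⋃ (_ : m < n), Z m) = 0 := by
      have heq : Z n ∩ (⋃ m, ⋃ (_ : m < n), Z m) = ⋃ m, ⋃ (_ : m < n), (Z n ∩ Z m) := by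
        ext w
        simp only [Set.mem_inter_iff, Set.mem_iUnion]
        tauto
      rw [heq]
      exact hnullU (fun m => Z n ∩ Z m) (fun m => (hZmeas n).inter (hZmeas m)) n
        (fun m hm => hMZZ n m (Nat.ne_of_gt hm))
    have hd := Aux9.diff_eq M ((hZmeas n).inter hU) (hZmeas n) Set.inter_subset_left
    rw [Set.diff_self_inter, hinter, zero_add] at hd
    simp only [hZ'_def]
    exact hd.symm
  set R : Set Ωb := (⋃ n, Z n)ᶜ with hR_def
  have hRmeas : MeasurableSet R := (MeasurableSet.iUnion hZmeas).compl
  have hZ'pd : Pairwise (Function.onFun Disjoint Z') := by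
    have key : ∀ i j, i < j → Disjoint (Z' i) (Z' j) := by
      intro i j hij
      rw [Set.disjoint_left]
      intro w hwi hwj
      simp only [hZ'_def] at hwj
      exact hwj.2 (Set.mem_iUnion.2 ⟨i, Set.mem_iUnion.2 ⟨hij, hZ'sub i hwi⟩⟩)
    intro i j hij
    rcases lt_or_gt_of_ne hij with h | h
    · exact key i j h
    · exact (key j i h).symm
  have hUZ' : (⋃ n, Z' n) = ⋃ n, Z n := by
    ext w
    constructor
    · rintro hw
      obtain ⟨n, hn⟩ := Set.mem_iUnion.1 hw
      exact Set.mem_iUnion.2 ⟨n, hZ'sub n hn⟩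
    · intro hw
      obtain ⟨n, hn⟩ := Set.mem_iUnion.1 hw
      have hex : ∃ m, w ∈ Z m := ⟨n, hn⟩
      refine Set.mem_iUnion.2 ⟨Nat.find hex, ?_⟩
      simp only [hZ'_def]
      refine ⟨Nat.find_spec hex, ?_⟩
      rw [Set.mem_iUnion]
      rintro ⟨m, hm⟩
      rw [Set.mem_iUnion] at hm
      exact Nat.find_min hex hm.1 hm.2
  have hM1 : M.toFun (⋃ n, Z n) = 1 := by
    have hAuniv : A.toFun (⋃ n, X' n) = 1 := by
      rw [← A.total']
      refine hAeq _ _ (MeasurableSet.iUnion hX'meas) MeasurableSet.univ fun m => ?_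
      refine ⟨fun _ => trivial, fun _ => ?_⟩
      obtain ⟨n, _, hm⟩ := hcover m
      exact Set.mem_iUnion.2 ⟨n, hm⟩
    ext x
    have hs1 := M.m_iUnion' Z' hZ'meas hZ'pd x
    rw [hUZ'] at hs1
    have hs2 := A.m_iUnion' X' hX'meas hX'pd x
    have hfe : (fun n => M.toFun (Z' n) x) = fun n => A.toFun (X' n) x := by
      funext n; rw [hZ'M n, hZM n]
    rw [hfe] at hs1
    have hMA := hs1.unique hs2
    rw [hMA, hAuniv]
  have hMR : M.toFun R = 0 := by
    have hd := Aux9.add_disjoint M (MeasurableSet.iUnion hZmeas) hRmeas disjoint_compl_right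
    rw [Set.union_compl_self, M.total', hM1] at hd
    exact (add_eq_left.1 hd.symm)
  -- the measurable assignment map
  set g : Ωb → ℕ := fun w => if h : ∃ n, w ∈ Z n then Nat.find h else 0 with hg_def
  have hgmem : ∀ w, w ∈ Z' (g w) ∨ (g w = 0 ∧ w ∈ R) := by
    intro w
    by_cases h : ∃ n, w ∈ Z n
    · left
      have hgw : g w = Nat.find h := by simp only [hg_def]; rw [dif_pos h]
      rw [hgw]
      simp only [hZ'_def]
      refine ⟨Nat.find_spec h, ?_⟩
      rw [Set.mem_iUnion]
      rintro ⟨m, hm⟩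
      rw [Set.mem_iUnion] at hm
      exact Nat.find_min h hm.1 hm.2
    · right
      refine ⟨by simp only [hg_def]; rw [dif_neg h], ?_⟩
      simp only [hR_def, Set.mem_compl_iff, Set.mem_iUnion]
      exact h
  have hgZ' : ∀ w n, w ∈ Z' n → g w = n := by
    intro w n hw
    simp only [hZ'_def] at hw
    have h : ∃ m, w ∈ Z m := ⟨n, hw.1⟩
    have hgw : g w = Nat.find h := by simp only [hg_def]; rw [dif_pos h]
    rw [hgw]
    refine le_antisymm (Nat.find_le hw.1) ?_
    rw [Nat.le_find_iff]
    intro m hm hmem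
    exact (Set.mem_iUnion.2 ⟨m, Set.mem_iUnion.2 ⟨hm, hmem⟩⟩ : w ∈ ⋃ m, ⋃ (_ : m < n), Z m) |> hw.2
  have hgR : ∀ w, w ∈ R → g w = 0 := by
    intro w hw
    rcases hgmem w with hmem | ⟨h0, _⟩
    · exfalso
      have : w ∈ ⋃ n, Z n := Set.mem_iUnion.2 ⟨g w, hZ'sub _ hmem⟩
      rw [hR_def] at hw
      exact hw this
    · exact h0
  have hgpre : ∀ n, g ⁻¹' {n} = Z' n ∪ (if n = 0 then R else ∅) := by
    intro n
    ext w
    simp only [Set.mem_preimage, Set.mem_singleton_iff, Set.mem_union]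
    constructor
    · intro hgw
      rcases hgmem w with hw | ⟨h0, hwR⟩
      · left; rwa [hgw] at hw
      · right
        rw [← hgw, h0, if_pos rfl]
        exact hwR
    · rintro (hw | hw)
      · exact hgZ' w n hw
      · by_cases h0 : n = 0
        · rw [if_pos h0] at hw
          rw [hgR w hw, h0]
        · rw [if_neg h0] at hw
          exact absurd hw (Set.notMem_empty w)
  have hgmeas : Measurable g := by
    refine measurable_to_countable' fun n => ?_
    rw [hgpre n]
    by_cases h0 : n = 0
    · rw [if_pos h0]; exact (hZ'meas n).union hRmeas
    · rw [if_neg h0]; simpa using hZ'meas n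
  set f : Ωb → Ω := fun w => e (g w) with hf_def
  have hfmeas : Measurable f := measurable_from_nat.comp hgmeas
  set φ : Ωb → Ω × Ωb := fun w => (f w, w) with hφ_def
  have hφmeas : Measurable φ := hfmeas.prodMk measurable_id
  have hU'M : ∀ n, M.toFun (g ⁻¹' {n}) = A.toFun (X' n) := by
    intro n
    rw [hgpre n]
    by_cases h0 : n = 0
    · rw [if_pos h0]
      have hdisj : Disjoint (Z' n) R := by
        rw [Set.disjoint_left]
        intro w hw hwR
        rw [hR_def] at hwR
        exact hwR (Set.mem_iUnion.2 ⟨n, hZ'sub n hw⟩)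
      rw [Aux9.add_disjoint M (hZ'meas n) hRmeas hdisj, hMR, add_zero, hZ'M n, hZM n]
    · rw [if_neg h0, Set.union_empty, hZ'M n, hZM n]
  -- the joint observable
  refine ⟨⟨fun S => if MeasurableSet S then M.toFun (φ ⁻¹' S) else 0, ?_, ?_, ?_, ?_, ?_⟩,
    ?_, ?_⟩
  · intro s
    show (if MeasurableSet s then M.toFun (φ ⁻¹' s) else 0).IsPositive
    by_cases hs : MeasurableSet s
    · rw [if_pos hs]; exact M.isPositive' _
    · rw [if_neg hs]; exact ContinuousLinearMap.isPositive_zero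
  · show (if MeasurableSet (∅ : Set (Ω × Ωb)) then M.toFun (φ ⁻¹' ∅) else 0) = 0
    rw [if_pos MeasurableSet.empty, Set.preimage_empty, M.empty']
  · show (if MeasurableSet (Set.univ : Set (Ω × Ωb)) then M.toFun (φ ⁻¹' Set.univ) else 0) = 1
    rw [if_pos MeasurableSet.univ, Set.preimage_univ, M.total']
  · intro s hs
    show (if MeasurableSet s then M.toFun (φ ⁻¹' s) else 0) = 0
    rw [if_neg hs]
  · intro fam hfammeas hfampd x
    show HasSum (fun n => (if MeasurableSet (fam n) then M.toFun (φ ⁻¹' fam n) else 0) x)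
      ((if MeasurableSet (⋃ n, fam n) then M.toFun (φ ⁻¹' ⋃ n, fam n) else 0) x)
    have hfun : (fun n => (if MeasurableSet (fam n) then M.toFun (φ ⁻¹' fam n) else 0) x)
        = fun n => M.toFun (φ ⁻¹' fam n) x := by
      funext n; rw [if_pos (hfammeas n)]
    have h := M.m_iUnion' (fun n => φ ⁻¹' fam n) (fun n => hφmeas (hfammeas n))
      (fun i j hij => Disjoint.preimage φ (hfampd hij)) x
    rw [← Set.preimage_iUnion] at h
    rw [if_pos (MeasurableSet.iUnion hfammeas), hfun]
    exact h
  · -- first marginal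
    intro Xs hXs
    have hmeasP : MeasurableSet (Xs ×ˢ (Set.univ : Set Ωb)) := hXs.prod MeasurableSet.univ
    have hpre : φ ⁻¹' (Xs ×ˢ (Set.univ : Set Ωb)) = f ⁻¹' Xs := by
      ext w
      simp [hφ_def, Set.mem_prod]
    show (if MeasurableSet (Xs ×ˢ (Set.univ : Set Ωb))
        then M.toFun (φ ⁻¹' (Xs ×ˢ (Set.univ : Set Ωb))) else 0) = A.toFun Xs
    rw [if_pos hmeasP, hpre]
    set V : ℕ → Set Ωb := fun n => if e n ∈ Xs then g ⁻¹' {n} else ∅ with hV_def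
    set V' : ℕ → Set Ω := fun n => if e n ∈ Xs then X' n else ∅ with hV'_def
    have hVmeas : ∀ n, MeasurableSet (V n) := by
      intro n
      simp only [hV_def]
      by_cases h : e n ∈ Xs
      · rw [if_pos h]; exact hgmeas (measurableSet_singleton n)
      · rw [if_neg h]; exact MeasurableSet.empty
    have hV'meas : ∀ n, MeasurableSet (V' n) := by
      intro n
      simp only [hV'_def]
      by_cases h : e n ∈ Xs
      · rw [if_pos h]; exact hX'meas n
      · rw [if_neg h]; exact MeasurableSet.empty
    have hVsub : ∀ n, V n ⊆ g ⁻¹' {n} := by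
      intro n
      simp only [hV_def]
      by_cases h : e n ∈ Xs
      · rw [if_pos h]
      · rw [if_neg h]; exact Set.empty_subset _
    have hV'sub : ∀ n, V' n ⊆ X' n := by
      intro n
      simp only [hV'_def]
      by_cases h : e n ∈ Xs
      · rw [if_pos h]
      · rw [if_neg h]; exact Set.empty_subset _
    have hVpd : Pairwise (Function.onFun Disjoint V) := by
      intro i j hij
      refine Disjoint.mono (hVsub i) (hVsub j) ?_
      rw [Set.disjoint_left]
      intro w hwi hwj
      rw [Set.mem_preimage, Set.mem_singleton_iff] at hwi hwj
      exact hij (hwi ▸ hwj ▸ rfl)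
    have hV'pd : Pairwise (Function.onFun Disjoint V') :=
      fun i j hij => Disjoint.mono (hV'sub i) (hV'sub j) (hX'pd hij)
    have hUV : (⋃ n, V n) = f ⁻¹' Xs := by
      ext w
      simp only [Set.mem_iUnion, Set.mem_preimage]
      constructor
      · rintro ⟨n, hn⟩
        simp only [hV_def] at hn
        by_cases h : e n ∈ Xs
        · rw [if_pos h] at hn
          rw [Set.mem_preimage, Set.mem_singleton_iff] at hn
          show e (g w) ∈ Xs
          rw [hn]; exact h
        · rw [if_neg h] at hn
          exact absurd hn (Set.notMem_empty w)
      · intro hw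
        refine ⟨g w, ?_⟩
        simp only [hV_def]
        rw [if_pos hw]
        exact rfl
    have hterm : ∀ n, M.toFun (V n) = A.toFun (V' n) := by
      intro n
      simp only [hV_def, hV'_def]
      by_cases h : e n ∈ Xs
      · rw [if_pos h, if_pos h]; exact hU'M n
      · rw [if_neg h, if_neg h, M.empty', A.empty']
    have hAV : A.toFun (⋃ n, V' n) = A.toFun Xs := by
      refine hAeq _ _ (MeasurableSet.iUnion hV'meas) hXs fun m => ?_
      constructor
      · intro hm
        obtain ⟨n, hn⟩ := Set.mem_iUnion.1 hm
        simp only [hV'_def] at hn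
        by_cases h : e n ∈ Xs
        · rw [if_pos h] at hn
          exact ((hX'rel n m hn) Xs hXs).1 h
        · rw [if_neg h] at hn
          exact absurd hn (Set.notMem_empty _)
      · intro hm
        obtain ⟨n, _, hn⟩ := hcover m
        have henX : e n ∈ Xs := ((hX'rel n m hn) Xs hXs).2 hm
        refine Set.mem_iUnion.2 ⟨n, ?_⟩
        simp only [hV'_def]
        rw [if_pos henX]
        exact hn
    ext x
    have hs1 := M.m_iUnion' V hVmeas hVpd x
    rw [hUV] at hs1
    have hs2 := A.m_iUnion' V' hV'meas hV'pd x
    rw [hAV] at hs2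
    have hfun : (fun n => M.toFun (V n) x) = fun n => A.toFun (V' n) x := by
      funext n; rw [hterm n]
    rw [hfun] at hs1
    exact hs1.unique hs2
  · -- second marginal
    intro Y hY
    have hmeasP : MeasurableSet ((Set.univ : Set Ω) ×ˢ Y) := MeasurableSet.univ.prod hY
    have hpre : φ ⁻¹' ((Set.univ : Set Ω) ×ˢ Y) = Y := by
      ext w
      simp [hφ_def, Set.mem_prod]
    show (if MeasurableSet ((Set.univ : Set Ω) ×ˢ Y)
        then M.toFun (φ ⁻¹' ((Set.univ : Set Ω) ×ˢ Y)) else 0) = M.toFun Y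
    rw [if_pos hmeasP, hpre]
end

section
/- Let M be an extreme POVM on (Ω̄,Σ̄) with minimal Naimark dilation (K,P,J), and let A be a POVM on (Ω,Σ) with ran A ⊆ ran M. Then the map Q : Σ → L(K) defined by Q(X) := P(Z_X), where Z_X satisfies A(X) = M(Z_X), is well-defined (independent of the choice of Z_X) and is a projection-valued measure with A(X) = J* Q(X) J for all X. -/
open scoped InnerProductSpace
set_option linter.unusedSectionVars false
set_option maxHeartbeats 1000000

variable {Ω Ω' Ωb : Type*} [MeasurableSpace Ω] [MeasurableSpace Ω'] [MeasurableSpace Ωb]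
variable {H : Type*} [NormedAddCommGroup H] [InnerProductSpace ℂ H] [CompleteSpace H]

section Aux
variable {E : Type*} [NormedAddCommGroup E] [InnerProductSpace ℂ E] [CompleteSpace E]

/-- If `e`, `f`, `e+f` are idempotent then `e*f = 0`. -/
lemma aux_proj_add_proj {e f : E →L[ℂ] E} (he : IsIdempotentElem e) (hf : IsIdempotentElem f)
    (hef : IsIdempotentElem (e + f)) : e * f = 0 := by
  have hef' : (e + f) * (e + f) = e + f := hef
  have h1 : e * f + f * e = 0 := by
    have : e * e + (e * f + f * e) + f * f = e + f := by rw [← hef']; noncomm_ring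
    rw [he.eq, hf.eq] at this
    have h := congrArg (fun x => x - e - f) this
    calc e * f + f * e = e + (e * f + f * e) + f - e - f := by abel
      _ = e + f - e - f := by rw [this]
      _ = 0 := by abel
  have h2 : e * f + e * f * e = 0 := by
    have h := congrArg (fun x => e * x) h1
    simp only [mul_add, mul_zero, ← mul_assoc, he.eq] at h
    exact h
  have h3 : e * f * e + f * e = 0 := by
    have h := congrArg (fun x => x * e) h1
    simp only [add_mul, zero_mul, mul_assoc, he.eq] at h
    simpa [← mul_assoc] using h
  have h4 : e * f = f * e := by
    have : e * f - f * e = (e * f + e * f * e) - (e * f * e + f * e) := by abel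
    rw [h2, h3, sub_zero] at this
    exact sub_eq_zero.mp this
  have h6 : (2 : ℂ) • (e * f) = 0 := by
    rw [two_smul]
    calc e * f + e * f = e * f + f * e := by rw [h4]
      _ = 0 := h1
  have := smul_eq_zero.mp h6
  simpa using this

lemma aux_inner_proj {T : E →L[ℂ] E} (hsa : IsSelfAdjoint T) (hid : IsIdempotentElem T)
    (x : E) : ⟪x, T x⟫_ℂ = (‖T x‖ : ℂ) ^ 2 := by
  have h1 : T (T x) = T x := by
    conv_rhs => rw [← hid.eq]
    rfl
  have h2 := ContinuousLinearMap.adjoint_inner_right T x (T x)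
  rw [hsa.adjoint_eq] at h2
  calc ⟪x, T x⟫_ℂ = ⟪x, T (T x)⟫_ℂ := by rw [h1]
    _ = ⟪T x, T x⟫_ℂ := h2
    _ = (‖T x‖ : ℂ) ^ 2 := inner_self_eq_norm_sq_to_K (T x)

lemma aux_norm_proj_le {T : E →L[ℂ] E} (hsa : IsSelfAdjoint T) (hid : IsIdempotentElem T)
    (x : E) : ‖T x‖ ≤ ‖x‖ := by
  have h := aux_inner_proj hsa hid x
  have h2 : ‖⟪x, T x⟫_ℂ‖ = ‖T x‖ ^ 2 := by
    rw [h]; simp [norm_pow]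
  have h3 : ‖⟪x, T x⟫_ℂ‖ ≤ ‖x‖ * ‖T x‖ := norm_inner_le_norm x (T x)
  nlinarith [norm_nonneg (T x), norm_nonneg x]

lemma aux_norm_sq_proj {T : E →L[ℂ] E} (hsa : IsSelfAdjoint T) (hid : IsIdempotentElem T)
    (x : E) : ‖T x‖ ^ 2 = Complex.re ⟪x, T x⟫_ℂ := by
  rw [aux_inner_proj hsa hid x, ← Complex.ofReal_pow, Complex.ofReal_re]

end Aux
section PovmAux
variable {Ωc : Type*} [MeasurableSpace Ωc]
variable {E : Type*} [NormedAddCommGroup E] [InnerProductSpace ℂ E] [CompleteSpace E]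

lemma povm_union (N : POVM Ωc E) {s t : Set Ωc} (hs : MeasurableSet s) (ht : MeasurableSet t)
    (hst : Disjoint s t) : N.toFun (s ∪ t) = N.toFun s + N.toFun t := by
  classical
  set f : ℕ → Set Ωc := fun n => if n = 0 then s else if n = 1 then t else ∅ with hf
  have hfm : ∀ n, MeasurableSet (f n) := by
    intro n; simp only [hf]
    split_ifs <;> simp [hs, ht]
  have hfd : Pairwise (Function.onFun Disjoint f) := by
    intro i j hij
    simp only [Function.onFun, hf]
    split_ifs <;> simp_all <;> first
      | exact hst
      | exact hst.symm
  have hU : (⋃ n, f n) = s ∪ t := by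
    apply Set.Subset.antisymm
    · refine Set.iUnion_subset fun n => ?_
      simp only [hf]; split_ifs <;> simp
    · intro x hx
      rcases hx with hx | hx
      · exact Set.mem_iUnion.mpr ⟨0, by simp [hf, hx]⟩
      · exact Set.mem_iUnion.mpr ⟨1, by simp [hf, hx]⟩
  ext x
  have h1 := N.m_iUnion' f hfm hfd x
  rw [hU] at h1
  have h2 : HasSum (fun n => N.toFun (f n) x) (∑ n ∈ ({0, 1} : Finset ℕ), N.toFun (f n) x) := by
    apply hasSum_sum_of_ne_finset_zero
    intro b hb
    have hb0 : b ≠ 0 := by intro h; apply hb; simp [h]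
    have hb1 : b ≠ 1 := by intro h; apply hb; simp [h]
    simp [hf, hb0, hb1, N.empty']
  have := h1.unique h2
  rw [this]
  simp [hf]

lemma sharp_orth (P : POVM Ωc E) (hP : P.IsSharp) {s t : Set Ωc} (hs : MeasurableSet s)
    (ht : MeasurableSet t) (hst : Disjoint s t) : P.toFun s * P.toFun t = 0 := by
  apply aux_proj_add_proj (hP s) (hP t)
  rw [← povm_union P hs ht hst]
  exact hP _

lemma sharp_mul (P : POVM Ωc E) (hP : P.IsSharp) {s t : Set Ωc} (hs : MeasurableSet s)
    (ht : MeasurableSet t) : P.toFun s * P.toFun t = P.toFun (s ∩ t) := by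
  have hds : P.toFun s = P.toFun (s ∩ t) + P.toFun (s \ t) := by
    rw [← povm_union P (hs.inter ht) (hs.diff ht) (Set.disjoint_of_subset_left
      Set.inter_subset_right Set.disjoint_sdiff_right)]
    rw [Set.inter_union_diff]
  have hdt : P.toFun t = P.toFun (s ∩ t) + P.toFun (t \ s) := by
    rw [← povm_union P (hs.inter ht) (ht.diff hs) ?_]
    · rw [Set.inter_comm, Set.inter_union_diff]
    · exact Set.disjoint_of_subset_left Set.inter_subset_left Set.disjoint_sdiff_right
  rw [hds, hdt]
  have h11 : P.toFun (s ∩ t) * P.toFun (s ∩ t) = P.toFun (s ∩ t) := (hP _).eq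
  have h12 : P.toFun (s ∩ t) * P.toFun (t \ s) = 0 :=
    sharp_orth P hP (hs.inter ht) (ht.diff hs)
      (Set.disjoint_of_subset Set.inter_subset_left (Set.Subset.refl _) Set.disjoint_sdiff_right)
  have h21 : P.toFun (s \ t) * P.toFun (s ∩ t) = 0 :=
    sharp_orth P hP (hs.diff ht) (hs.inter ht)
      (Set.disjoint_of_subset (Set.Subset.refl _) Set.inter_subset_right Set.disjoint_sdiff_left)
  have h22 : P.toFun (s \ t) * P.toFun (t \ s) = 0 :=
    sharp_orth P hP (hs.diff ht) (ht.diff hs)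
      (Set.disjoint_of_subset Set.diff_subset (Set.Subset.refl _) Set.disjoint_sdiff_right)
  calc (P.toFun (s ∩ t) + P.toFun (s \ t)) * (P.toFun (s ∩ t) + P.toFun (t \ s))
      = P.toFun (s ∩ t) * P.toFun (s ∩ t) + P.toFun (s ∩ t) * P.toFun (t \ s)
        + P.toFun (s \ t) * P.toFun (s ∩ t) + P.toFun (s \ t) * P.toFun (t \ s) := by
        noncomm_ring
    _ = P.toFun (s ∩ t) := by rw [h11, h12, h21, h22]; abel

lemma sharp_comm (P : POVM Ωc E) (hP : P.IsSharp) (s t : Set Ωc) :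
    Commute (P.toFun s) (P.toFun t) := by
  by_cases hs : MeasurableSet s
  · by_cases ht : MeasurableSet t
    · unfold Commute SemiconjBy
      rw [sharp_mul P hP hs ht, sharp_mul P hP ht hs, Set.inter_comm]
    · rw [P.not_measurable' t ht]; exact Commute.zero_right _
  · rw [P.not_measurable' s hs]; exact Commute.zero_left _

end PovmAux
section Aux2
variable {E : Type*} [NormedAddCommGroup E] [InnerProductSpace ℂ E] [CompleteSpace E]

lemma aux_pos_one_add {D : E →L[ℂ] E} (hsa : IsSelfAdjoint D)
    (hsmall : ∀ x, ‖D x‖ ≤ ‖x‖) : (1 + D).IsPositive := by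
  constructor
  · exact ContinuousLinearMap.isSelfAdjoint_iff_isSymmetric.mp ((IsSelfAdjoint.one _).add hsa)
  · intro x
    rw [ContinuousLinearMap.reApplyInnerSelf]
    simp only [ContinuousLinearMap.add_apply, ContinuousLinearMap.one_apply, inner_add_left,
      map_add]
    have h1 : Complex.re ⟪x, x⟫_ℂ = ‖x‖ ^ 2 := by
      have := inner_self_eq_norm_sq (𝕜 := ℂ) x
      simpa [RCLike.re_to_complex] using this
    have h2 : |Complex.re ⟪D x, x⟫_ℂ| ≤ ‖x‖ ^ 2 := by
      calc |Complex.re ⟪D x, x⟫_ℂ| ≤ ‖⟪D x, x⟫_ℂ‖ := Complex.abs_re_le_norm _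
        _ ≤ ‖D x‖ * ‖x‖ := norm_inner_le_norm _ _
        _ ≤ ‖x‖ * ‖x‖ := mul_le_mul_of_nonneg_right (hsmall x) (norm_nonneg x)
        _ = ‖x‖ ^ 2 := by ring
    simp only [RCLike.re_to_complex]
    have := abs_le.mp h2
    linarith [this.1]

lemma aux_pos_proj_comp {T D : E →L[ℂ] E} (hT : T.IsPositive) (hTid : IsIdempotentElem T)
    (hD : D.IsPositive) (hcomm : Commute T D) : (T ∘L D).IsPositive := by
  have hsa : IsSelfAdjoint (T ∘L D) := by
    rw [ContinuousLinearMap.isSelfAdjoint_iff']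
    rw [ContinuousLinearMap.adjoint_comp, hT.isSelfAdjoint.adjoint_eq, hD.isSelfAdjoint.adjoint_eq]
    exact hcomm.symm.eq
  constructor
  · exact ContinuousLinearMap.isSelfAdjoint_iff_isSymmetric.mp hsa
  · intro x
    rw [ContinuousLinearMap.reApplyInnerSelf, ContinuousLinearMap.comp_apply]
    have h1 : T (D x) = T (T (D x)) := by
      conv_lhs => rw [← hTid.eq]
      rfl
    have h2 : ⟪T (T (D x)), x⟫_ℂ = ⟪T (D x), T x⟫_ℂ := by
      rw [← ContinuousLinearMap.adjoint_inner_right T (T (D x)) x, hT.isSelfAdjoint.adjoint_eq]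
    have h3 : T (D x) = D (T x) := congrFun (congrArg DFunLike.coe hcomm.eq) x
    rw [h1, h2, h3]
    exact hD.re_inner_nonneg_left (T x)

end Aux2
section Perturb
variable {Ωc : Type*} [MeasurableSpace Ωc]
variable {H' : Type*} [NormedAddCommGroup H'] [InnerProductSpace ℂ H'] [CompleteSpace H']
variable {K' : Type*} [NormedAddCommGroup K'] [InnerProductSpace ℂ K'] [CompleteSpace K']

open ContinuousLinearMap in
lemma povm_perturb (P : POVM Ωc K') (hP : P.IsSharp) (J : H' →L[ℂ] K')
    (hJJ : (adjoint J) ∘L J = 1)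
    (D : K' →L[ℂ] K') (hsa : IsSelfAdjoint D) (hcomm : ∀ W, Commute (P.toFun W) D)
    (hsmall : ∀ x, ‖D x‖ ≤ ‖x‖)
    (hzero : (adjoint J) ∘L (D ∘L J) = 0) :
    ∃ N : POVM Ωc H', ∀ W, N.toFun W = (adjoint J) ∘L ((P.toFun W ∘L (1 + D)) ∘L J) := by
  have hpos1D : (1 + D).IsPositive := aux_pos_one_add hsa hsmall
  have hposW : ∀ W, (P.toFun W ∘L (1 + D)).IsPositive := fun W =>
    aux_pos_proj_comp (P.isPositive' W) (hP W) hpos1D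
      ((Commute.one_right _).add_right (hcomm W))
  refine ⟨⟨fun W => (adjoint J) ∘L ((P.toFun W ∘L (1 + D)) ∘L J), ?_, ?_, ?_, ?_, ?_⟩,
    fun W => rfl⟩
  · intro W
    exact (hposW W).adjoint_conj J
  · show (adjoint J) ∘L ((P.toFun ∅ ∘L (1 + D)) ∘L J) = 0
    rw [P.empty']
    ext x; simp
  · show (adjoint J) ∘L ((P.toFun Set.univ ∘L (1 + D)) ∘L J) = 1
    rw [P.total']
    have h1 : ((1 : K' →L[ℂ] K') ∘L (1 + D)) ∘L J = J + D ∘L J := by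
      ext x; simp
    rw [h1, ContinuousLinearMap.comp_add, hJJ, hzero, add_zero]
  · intro s hs
    show (adjoint J) ∘L ((P.toFun s ∘L (1 + D)) ∘L J) = 0
    rw [P.not_measurable' s hs]
    ext x; simp
  · intro f hm hd x
    have h1 := P.m_iUnion' f hm hd ((1 + D) (J x))
    have h2 := h1.mapL (adjoint J)
    convert h2 using 1 <;> rfl
end Perturb
section Key
variable {Ωc : Type*} [MeasurableSpace Ωc]
variable {H' : Type*} [NormedAddCommGroup H'] [InnerProductSpace ℂ H'] [CompleteSpace H']
variable {K' : Type*} [NormedAddCommGroup K'] [InnerProductSpace ℂ K'] [CompleteSpace K']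

open ContinuousLinearMap in
lemma key_extreme (M : POVM Ωc H') (P : POVM Ωc K') (J : H' →L[ℂ] K')
    (hext : M.Extreme) (hP : P.IsSharp)
    (hdil : ∀ Z, M.toFun Z = (adjoint J) ∘L P.toFun Z ∘L J)
    (hmin : Dense (Submodule.span ℂ
      {y : K' | ∃ (Z : Set Ωc) (φ : H'), y = P.toFun Z (J φ)} : Set K'))
    (D : K' →L[ℂ] K') (hsa : IsSelfAdjoint D) (hcomm : ∀ W, Commute (P.toFun W) D)
    (hsmall : ∀ x, ‖D x‖ ≤ ‖x‖)
    (hzero : (adjoint J) ∘L (D ∘L J) = 0) : D = 0 := by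
  have hJJ : (adjoint J) ∘L J = 1 := by
    have h := hdil Set.univ
    rw [M.total', P.total'] at h
    have h2 : (1 : K' →L[ℂ] K') ∘L J = J := by ext x; simp
    rw [h2] at h
    exact h.symm
  have hzero' : (adjoint J) ∘L ((-D) ∘L J) = 0 := by
    rw [ContinuousLinearMap.neg_comp, ContinuousLinearMap.comp_neg, hzero, neg_zero]
  obtain ⟨Np, hNp⟩ := povm_perturb P hP J hJJ D hsa hcomm hsmall hzero
  obtain ⟨Nm, hNm⟩ := povm_perturb P hP J hJJ (-D) hsa.neg
    (fun W => (hcomm W).neg_right) (fun x => by simpa using hsmall x) hzero'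
  have hconv : ∀ s, M.toFun s = ((1/2 : ℝ) : ℂ) • Np.toFun s
      + ((1 - (1/2 : ℝ) : ℝ) : ℂ) • Nm.toFun s := by
    intro s
    rw [hNp s, hNm s, hdil s]
    ext x
    simp only [ContinuousLinearMap.comp_apply, ContinuousLinearMap.add_apply,
      ContinuousLinearMap.smul_apply, ContinuousLinearMap.one_apply,
      ContinuousLinearMap.neg_apply, map_add, map_neg]
    norm_num
    module
  obtain ⟨h1, -⟩ := hext Np Nm (1/2) (by norm_num) (by norm_num) (by
    intro s
    have := hconv s
    norm_num at this ⊢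
    convert this using 2)
  have hz : ∀ (W : Set Ωc) (ψ φ : H'), ⟪J φ, P.toFun W (D (J ψ))⟫_ℂ = 0 := by
    intro W ψ φ
    have hW := congrFun h1 W
    rw [hNp W, hdil W] at hW
    have happ := congrFun (congrArg DFunLike.coe hW) ψ
    simp only [ContinuousLinearMap.comp_apply, ContinuousLinearMap.add_apply,
      ContinuousLinearMap.one_apply, map_add] at happ
    have hkey : (adjoint J) (P.toFun W (D (J ψ))) = 0 := by
      rwa [add_eq_left] at happ
    calc ⟪J φ, P.toFun W (D (J ψ))⟫_ℂ = ⟪φ, (adjoint J) (P.toFun W (D (J ψ)))⟫_ℂ :=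
          (ContinuousLinearMap.adjoint_inner_right J φ _).symm
      _ = 0 := by rw [hkey, inner_zero_right]
  set S : Set K' := {y : K' | ∃ (Z : Set Ωc) (φ : H'), y = P.toFun Z (J φ)} with hSdef
  have hS : ∀ y ∈ S, ∀ z ∈ S, ⟪y, D z⟫_ℂ = 0 := by
    rintro y ⟨W₁, φ, rfl⟩ z ⟨W₂, ψ, rfl⟩
    have hDP : D (P.toFun W₂ (J ψ)) = P.toFun W₂ (D (J ψ)) := by
      have := congrFun (congrArg DFunLike.coe (hcomm W₂).eq) (J ψ)
      simpa [ContinuousLinearMap.mul_apply] using this.symm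
    rw [hDP]
    have hmove := ContinuousLinearMap.adjoint_inner_left (P.toFun W₁)
      (P.toFun W₂ (D (J ψ))) (J φ)
    rw [(P.isPositive' W₁).isSelfAdjoint.adjoint_eq] at hmove
    rw [hmove]
    by_cases h1m : MeasurableSet W₁
    · by_cases h2m : MeasurableSet W₂
      · have : P.toFun W₁ (P.toFun W₂ (D (J ψ))) = P.toFun (W₁ ∩ W₂) (D (J ψ)) := by
          have := congrFun (congrArg DFunLike.coe (sharp_mul P hP h1m h2m)) (D (J ψ))
          simpa [ContinuousLinearMap.mul_apply] using this
        rw [this]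
        exact hz (W₁ ∩ W₂) ψ φ
      · rw [P.not_measurable' W₂ h2m]
        simp
    · rw [P.not_measurable' W₁ h1m]
      simp
  have hA : ∀ y ∈ S, ∀ z, ⟪y, D z⟫_ℂ = 0 := by
    intro y hy z
    have h0 : (innerSL ℂ y).comp D = 0 := by
      apply ContinuousLinearMap.ext_on hmin
      intro w hw
      simpa using hS y hy w hw
    have := congrFun (congrArg DFunLike.coe h0) z
    simpa using this
  have hB : ∀ z, D z = 0 := by
    intro z
    have h0 : innerSL ℂ (D z) = 0 := by
      apply ContinuousLinearMap.ext_on hmin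
      intro w hw
      have := hA w hw z
      simpa [inner_eq_zero_symm] using this
    have := congrFun (congrArg DFunLike.coe h0) (D z)
    simpa [inner_self_eq_zero] using this
  ext z
  simp [hB z]

end Key
section Key2
variable {Ωc : Type*} [MeasurableSpace Ωc]
variable {H' : Type*} [NormedAddCommGroup H'] [InnerProductSpace ℂ H'] [CompleteSpace H']
variable {K' : Type*} [NormedAddCommGroup K'] [InnerProductSpace ℂ K'] [CompleteSpace K']

open ContinuousLinearMap in
lemma key_extreme' (M : POVM Ωc H') (P : POVM Ωc K') (J : H' →L[ℂ] K')
    (hext : M.Extreme) (hP : P.IsSharp)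
    (hdil : ∀ Z, M.toFun Z = (adjoint J) ∘L P.toFun Z ∘L J)
    (hmin : Dense (Submodule.span ℂ
      {y : K' | ∃ (Z : Set Ωc) (φ : H'), y = P.toFun Z (J φ)} : Set K'))
    (D : K' →L[ℂ] K') (hsa : IsSelfAdjoint D) (hcomm : ∀ W, Commute (P.toFun W) D)
    (c : ℝ) (hc : 0 < c) (hbound : ∀ x, ‖D x‖ ≤ c * ‖x‖)
    (hzero : ∀ x : H', (adjoint J) (D (J x)) = 0) : D = 0 := by
  set a : ℂ := ((c⁻¹ : ℝ) : ℂ) with ha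
  have ha0 : a ≠ 0 := by
    simp [ha, Complex.ofReal_eq_zero]
    positivity
  have hsa' : IsSelfAdjoint (a • D) := by
    apply IsSelfAdjoint.smul _ hsa
    show star ((c⁻¹ : ℝ) : ℂ) = _
    rw [Complex.star_def, Complex.conj_ofReal]
  have hcomm' : ∀ W, Commute (P.toFun W) (a • D) := fun W => (hcomm W).smul_right a
  have hsmall' : ∀ x, ‖(a • D) x‖ ≤ ‖x‖ := by
    intro x
    rw [ContinuousLinearMap.smul_apply, norm_smul]
    have h1 : ‖a‖ = c⁻¹ := by
      rw [ha, Complex.norm_real, Real.norm_eq_abs, abs_of_pos (by positivity)]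
    rw [h1]
    calc c⁻¹ * ‖D x‖ ≤ c⁻¹ * (c * ‖x‖) := by
          apply mul_le_mul_of_nonneg_left (hbound x) (by positivity)
      _ = ‖x‖ := by field_simp
  have hzero' : (adjoint J) ∘L ((a • D) ∘L J) = 0 := by
    ext x
    simp [hzero x]
  have h := key_extreme M P J hext hP hdil hmin (a • D) hsa' hcomm' hsmall' hzero'
  rcases smul_eq_zero.mp h with h' | h'
  · exact absurd h' ha0
  · exact h'

lemma finsum_additive {E : Type*} [NormedAddCommGroup E] [InnerProductSpace ℂ E]
    [CompleteSpace E] (g : Set Ωc → (E →L[ℂ] E)) (hg0 : g ∅ = 0)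
    (hgadd : ∀ X Y, MeasurableSet X → MeasurableSet Y → Disjoint X Y →
      g (X ∪ Y) = g X + g Y)
    (f : ℕ → Set Ωc) (hm : ∀ n, MeasurableSet (f n)) (hd : Pairwise (Function.onFun Disjoint f))
    (s : Finset ℕ) : g (⋃ n ∈ s, f n) = ∑ n ∈ s, g (f n) := by
  classical
  induction s using Finset.induction_on with
  | empty => simpa using hg0
  | insert b t h ih =>
    have hmeas : MeasurableSet (⋃ n ∈ t, f n) := t.measurableSet_biUnion (fun n _ => hm n)
    have hdisj : Disjoint (f b) (⋃ n ∈ t, f n) := by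
      rw [Set.disjoint_iUnion₂_right]
      intro i hi
      exact hd (by rintro rfl; exact h hi)
    rw [Finset.set_biUnion_insert, hgadd _ _ (hm b) hmeas hdisj, ih, Finset.sum_insert h]

end Key2

/-- Let `M` be an extreme POVM on `(Ω̄,Σ̄)` with minimal Naimark dilation
`(K,P,J)`, and `A` a POVM on `(Ω,Σ)` with `ran A ⊆ ran M`.  Then `Q(X) := P(Z_X)` (where
`A(X) = M(Z_X)`) is well defined — `M(Z) = M(Z')` implies `P(Z) = P(Z')` — and defines a
projection-valued measure `Q` with `A(X) = J* Q(X) J` for all `X`. -/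
theorem extreme_mother_induced_pvm
    {K : Type*} [NormedAddCommGroup K] [InnerProductSpace ℂ K] [CompleteSpace K]
    (M : POVM Ωb H) (hext : M.Extreme)
    (P : POVM Ωb K) (hP : P.IsSharp) (J : H →L[ℂ] K)
    (hJ : ∀ x : H, ‖J x‖ = ‖x‖)
    (hdil : ∀ Z, M.toFun Z = (ContinuousLinearMap.adjoint J) ∘L P.toFun Z ∘L J)
    (hmin : Dense (Submodule.span ℂ
      {y : K | ∃ (Z : Set Ωb) (φ : H), y = P.toFun Z (J φ)} : Set K))
    (A : POVM Ω H) (hran : RanSubset A M) :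
    (∀ Z Z', MeasurableSet Z → MeasurableSet Z' → M.toFun Z = M.toFun Z' →
      P.toFun Z = P.toFun Z') ∧
    ∃ Q : POVM Ω K, Q.IsSharp ∧
      (∀ X, MeasurableSet X →
        ∃ Z, MeasurableSet Z ∧ A.toFun X = M.toFun Z ∧ Q.toFun X = P.toFun Z) ∧
      (∀ X, A.toFun X = (ContinuousLinearMap.adjoint J) ∘L Q.toFun X ∘L J) := by
  classical
  have hMP : ∀ (Z : Set Ωb) (x : H),
      M.toFun Z x = (ContinuousLinearMap.adjoint J) (P.toFun Z (J x)) := by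
    intro Z x; rw [hdil Z]; rfl
  -- three-set well-definedness
  have wd3 : ∀ Z₁ Z₂ Z₃ : Set Ωb, M.toFun Z₁ = M.toFun Z₂ + M.toFun Z₃ →
      P.toFun Z₁ = P.toFun Z₂ + P.toFun Z₃ := by
    intro Z₁ Z₂ Z₃ hM
    have hsa : IsSelfAdjoint (P.toFun Z₁ - P.toFun Z₂ - P.toFun Z₃) :=
      ((P.isPositive' Z₁).isSelfAdjoint.sub (P.isPositive' Z₂).isSelfAdjoint).sub
        (P.isPositive' Z₃).isSelfAdjoint
    have hcm : ∀ W, Commute (P.toFun W) (P.toFun Z₁ - P.toFun Z₂ - P.toFun Z₃) := fun W =>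
      ((sharp_comm P hP W Z₁).sub_right (sharp_comm P hP W Z₂)).sub_right (sharp_comm P hP W Z₃)
    have hbd : ∀ x, ‖(P.toFun Z₁ - P.toFun Z₂ - P.toFun Z₃) x‖ ≤ 3 * ‖x‖ := by
      intro x
      have h1 := aux_norm_proj_le (P.isPositive' Z₁).isSelfAdjoint (hP Z₁) x
      have h2 := aux_norm_proj_le (P.isPositive' Z₂).isSelfAdjoint (hP Z₂) x
      have h3 := aux_norm_proj_le (P.isPositive' Z₃).isSelfAdjoint (hP Z₃) x
      simp only [ContinuousLinearMap.sub_apply]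
      calc ‖P.toFun Z₁ x - P.toFun Z₂ x - P.toFun Z₃ x‖
          ≤ ‖P.toFun Z₁ x - P.toFun Z₂ x‖ + ‖P.toFun Z₃ x‖ := norm_sub_le _ _
        _ ≤ ‖P.toFun Z₁ x‖ + ‖P.toFun Z₂ x‖ + ‖P.toFun Z₃ x‖ := by
            have := norm_sub_le (P.toFun Z₁ x) (P.toFun Z₂ x); linarith
        _ ≤ 3 * ‖x‖ := by linarith
    have hz : ∀ x : H, (ContinuousLinearMap.adjoint J)
        ((P.toFun Z₁ - P.toFun Z₂ - P.toFun Z₃) (J x)) = 0 := by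
      intro x
      have hMx := congrFun (congrArg DFunLike.coe hM) x
      simp only [ContinuousLinearMap.add_apply] at hMx
      rw [hMP Z₁ x, hMP Z₂ x, hMP Z₃ x] at hMx
      simp only [ContinuousLinearMap.sub_apply, map_sub]
      rw [hMx]; abel
    have h0 := key_extreme' M P J hext hP hdil hmin _ hsa hcm 3 (by norm_num) hbd hz
    rw [sub_sub] at h0
    exact sub_eq_zero.mp h0
  have wd : ∀ Z Z' : Set Ωb, M.toFun Z = M.toFun Z' → P.toFun Z = P.toFun Z' := by
    intro Z Z' h
    have := wd3 Z Z' ∅ (by rw [M.empty', add_zero]; exact h)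
    rwa [P.empty', add_zero] at this
  -- choice of representing sets
  have hZsel : ∀ X : Set Ω, ∃ Z : Set Ωb, MeasurableSet Z ∧
      (MeasurableSet X → M.toFun Z = A.toFun X) ∧ (¬ MeasurableSet X → Z = ∅) := by
    intro X
    by_cases h : MeasurableSet X
    · obtain ⟨Z, hZ1, hZ2⟩ := hran X h
      exact ⟨Z, hZ1, fun _ => hZ2, fun h' => absurd h h'⟩
    · exact ⟨∅, MeasurableSet.empty, fun h' => absurd h' h, fun _ => rfl⟩
  choose Zs hZm hZv hZe using hZsel
  set Q0 : Set Ω → (K →L[ℂ] K) := fun X => P.toFun (Zs X) with hQ0def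
  have hQsa : ∀ X, IsSelfAdjoint (Q0 X) := fun X => (P.isPositive' (Zs X)).isSelfAdjoint
  have hQid : ∀ X, IsIdempotentElem (Q0 X) := fun X => hP (Zs X)
  have hQle : ∀ X z, ‖Q0 X z‖ ≤ ‖z‖ := fun X z => aux_norm_proj_le (hQsa X) (hQid X) z
  have hQ0empty : Q0 ∅ = 0 := by
    have h1 : M.toFun (Zs ∅) = M.toFun ∅ := by
      rw [hZv ∅ MeasurableSet.empty, A.empty', M.empty']
    show P.toFun (Zs ∅) = 0
    rw [wd _ _ h1, P.empty']
  have hQ0univ : Q0 Set.univ = 1 := by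
    have h1 : M.toFun (Zs Set.univ) = M.toFun Set.univ := by
      rw [hZv Set.univ MeasurableSet.univ, A.total', M.total']
    show P.toFun (Zs Set.univ) = 1
    rw [wd _ _ h1, P.total']
  have hQ0nm : ∀ X, ¬ MeasurableSet X → Q0 X = 0 := by
    intro X hX
    show P.toFun (Zs X) = 0
    rw [hZe X hX, P.empty']
  have hQ0add : ∀ X Y, MeasurableSet X → MeasurableSet Y → Disjoint X Y →
      Q0 (X ∪ Y) = Q0 X + Q0 Y := by
    intro X Y hX hY hXY
    apply wd3
    rw [hZv _ (hX.union hY), hZv _ hX, hZv _ hY, povm_union A hX hY hXY]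
  have hQ0Jx : ∀ X, MeasurableSet X → ∀ z : H,
      (ContinuousLinearMap.adjoint J) (Q0 X (J z)) = A.toFun X z := by
    intro X hX z
    show (ContinuousLinearMap.adjoint J) (P.toFun (Zs X) (J z)) = A.toFun X z
    rw [← hMP (Zs X) z, hZv X hX]
  -- σ-additivity
  have hQiU : ∀ f : ℕ → Set Ω, (∀ n, MeasurableSet (f n)) → Pairwise (Function.onFun Disjoint f) →
      ∀ x : K, HasSum (fun n => Q0 (f n) x) (Q0 (⋃ n, f n) x) := by
    intro f hm hd x
    set U : Set Ω := ⋃ n, f n with hU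
    have hUm : MeasurableSet U := MeasurableSet.iUnion hm
    have hBmeas : ∀ s : Finset ℕ, MeasurableSet (⋃ n ∈ s, f n) :=
      fun s => s.measurableSet_biUnion (fun n _ => hm n)
    have hBsub : ∀ s : Finset ℕ, (⋃ n ∈ s, f n) ⊆ U :=
      fun s => Set.iUnion₂_subset (fun i _ => Set.subset_iUnion f i)
    have hsplit : ∀ s : Finset ℕ, Q0 U = Q0 (⋃ n ∈ s, f n) + Q0 (U \ ⋃ n ∈ s, f n) := by
      intro s
      rw [← hQ0add _ _ (hBmeas s) (hUm.diff (hBmeas s)) Set.disjoint_sdiff_right,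
        Set.union_diff_cancel (hBsub s)]
    set T : ℕ → (K →L[ℂ] K) := fun N => Q0 (U \ ⋃ n ∈ Finset.range N, f n) with hT
    have hQfin : ∀ s : Finset ℕ, Q0 (⋃ n ∈ s, f n) = ∑ n ∈ s, Q0 (f n) :=
      finsum_additive Q0 hQ0empty hQ0add f hm hd
    -- Step 1 : convergence on vectors J φ
    have hTJ : ∀ φ : H, Filter.Tendsto (fun N => T N (J φ)) Filter.atTop (nhds 0) := by
      intro φ
      have hAsum := A.m_iUnion' f hm hd φ
      have hAfin : ∀ s : Finset ℕ, A.toFun (⋃ n ∈ s, f n) = ∑ n ∈ s, A.toFun (f n) :=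
        finsum_additive A.toFun A.empty'
          (fun X Y hX hY hXY => povm_union A hX hY hXY) f hm hd
      have htendA : Filter.Tendsto (fun N => A.toFun (U \ ⋃ n ∈ Finset.range N, f n) φ)
          Filter.atTop (nhds 0) := by
        have hdiff : ∀ N : ℕ, A.toFun (U \ ⋃ n ∈ Finset.range N, f n) φ
            = A.toFun U φ - ∑ n ∈ Finset.range N, A.toFun (f n) φ := by
          intro N
          have h1 : A.toFun U = A.toFun (⋃ n ∈ Finset.range N, f n)
              + A.toFun (U \ ⋃ n ∈ Finset.range N, f n) := by
            rw [← povm_union A (hBmeas _) (hUm.diff (hBmeas _)) Set.disjoint_sdiff_right,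
              Set.union_diff_cancel (hBsub _)]
          have h2 := congrFun (congrArg DFunLike.coe h1) φ
          simp only [ContinuousLinearMap.add_apply] at h2
          rw [hAfin (Finset.range N)] at h2
          simp only [ContinuousLinearMap.sum_apply] at h2
          rw [h2]; abel
        rw [show (fun N => A.toFun (U \ ⋃ n ∈ Finset.range N, f n) φ)
            = fun N => A.toFun U φ - ∑ n ∈ Finset.range N, A.toFun (f n) φ from funext hdiff]
        have := Filter.Tendsto.sub (tendsto_const_nhds (x := A.toFun U φ))
          hAsum.tendsto_sum_nat
        simpa [← hU] using this
      have hsq : ∀ N : ℕ, ‖T N (J φ)‖ ^ 2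
          = Complex.re ⟪φ, A.toFun (U \ ⋃ n ∈ Finset.range N, f n) φ⟫_ℂ := by
        intro N
        rw [aux_norm_sq_proj (hQsa _) (hQid _) (J φ)]
        congr 1
        rw [← ContinuousLinearMap.adjoint_inner_right J φ (T N (J φ))]
        congr 1
        exact hQ0Jx _ (hUm.diff (hBmeas _)) φ
      have htre : Filter.Tendsto (fun N => ‖T N (J φ)‖ ^ 2) Filter.atTop (nhds 0) := by
        rw [show (fun N => ‖T N (J φ)‖ ^ 2)
            = fun N => Complex.re ⟪φ, A.toFun (U \ ⋃ n ∈ Finset.range N, f n) φ⟫_ℂ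
            from funext hsq]
        have h1 : Filter.Tendsto (fun N => (⟪φ, A.toFun (U \ ⋃ n ∈ Finset.range N, f n) φ⟫_ℂ))
            Filter.atTop (nhds 0) := by
          have hconst : Filter.Tendsto (fun _ : ℕ => φ) Filter.atTop (nhds φ) :=
            tendsto_const_nhds
          have := hconst.inner (𝕜 := ℂ) htendA
          simpa using this
        have := (Complex.continuous_re.tendsto 0).comp h1
        simpa [Function.comp_def] using this
      rw [tendsto_zero_iff_norm_tendsto_zero]
      have : Filter.Tendsto (fun N => Real.sqrt (‖T N (J φ)‖ ^ 2)) Filter.atTop (nhds 0) := by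
        have := htre.sqrt
        simpa using this
      convert this using 2 with N
      rw [Real.sqrt_sq (norm_nonneg _)]
    -- Step 2 : convergence on the generating set
    have hTS : ∀ y ∈ {y : K | ∃ (Z : Set Ωb) (φ : H), y = P.toFun Z (J φ)},
        Filter.Tendsto (fun N => T N y) Filter.atTop (nhds 0) := by
      rintro y ⟨W, φ, rfl⟩
      have hcm : ∀ N, T N (P.toFun W (J φ)) = P.toFun W (T N (J φ)) := by
        intro N
        have h := sharp_comm P hP (Zs (U \ ⋃ n ∈ Finset.range N, f n)) W
        have h2 := congrFun (congrArg DFunLike.coe h.eq) (J φ)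
        simp only [ContinuousLinearMap.mul_apply] at h2
        exact h2
      rw [tendsto_zero_iff_norm_tendsto_zero]
      apply squeeze_zero (fun N => norm_nonneg _) (g := fun N => ‖T N (J φ)‖)
      · intro N
        rw [hcm N]
        exact aux_norm_proj_le (P.isPositive' W).isSelfAdjoint (hP W) _
      · rw [← tendsto_zero_iff_norm_tendsto_zero]
        exact hTJ φ
    -- Step 3 : convergence on the span
    have hTspan : ∀ y ∈ Submodule.span ℂ
        {y : K | ∃ (Z : Set Ωb) (φ : H), y = P.toFun Z (J φ)},
        Filter.Tendsto (fun N => T N y) Filter.atTop (nhds 0) := by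
      intro y hy
      induction hy using Submodule.span_induction with
      | mem z hz => exact hTS z hz
      | zero => simpa using (tendsto_const_nhds : Filter.Tendsto (fun _ : ℕ => (0 : K)) _ _)
      | add a b _ _ iha ihb =>
        have := iha.add ihb
        simpa using this
      | smul c a _ iha =>
        have := iha.const_smul c
        simpa using this
    -- Step 4 : convergence everywhere
    have hTall : ∀ y : K, Filter.Tendsto (fun N => T N y) Filter.atTop (nhds 0) := by
      intro y
      rw [Metric.tendsto_atTop]
      intro ε hε
      obtain ⟨y', hy'⟩ := Metric.dense_iff.mp hmin y (ε / 2) (by positivity)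
      have hy1 : dist y' y < ε / 2 := Metric.mem_ball.mp hy'.1
      obtain ⟨N₀, hN₀⟩ := Metric.tendsto_atTop.mp (hTspan y' hy'.2) (ε / 2) (by positivity)
      refine ⟨N₀, fun N hN => ?_⟩
      have h1 : ‖T N y‖ ≤ ‖T N (y - y')‖ + ‖T N y'‖ := by
        calc ‖T N y‖ = ‖T N (y - y') + T N y'‖ := by rw [← map_add, sub_add_cancel]
          _ ≤ ‖T N (y - y')‖ + ‖T N y'‖ := norm_add_le _ _
      have h2 : ‖T N (y - y')‖ ≤ ‖y - y'‖ := hQle _ _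
      have h3 : ‖y - y'‖ < ε / 2 := by
        rw [← dist_eq_norm, dist_comm]
        exact hy1
      have h4 : ‖T N y'‖ < ε / 2 := by
        have := hN₀ N hN
        rwa [dist_zero_right] at this
      rw [dist_zero_right]
      linarith
    -- Step 5 : assemble the sum
    have hfinal : Filter.Tendsto (fun s : Finset ℕ => ∑ n ∈ s, Q0 (f n) x)
        Filter.atTop (nhds (Q0 U x)) := by
      rw [Metric.tendsto_nhds]
      intro ε hε
      have h2 : Filter.Tendsto (fun N => ‖x‖ * ‖T N x‖) Filter.atTop (nhds 0) := by
        have := (hTall x).norm.const_mul ‖x‖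
        simpa using this
      obtain ⟨N, hN⟩ := Metric.tendsto_atTop.mp h2 (ε ^ 2) (by positivity)
      have hNx : ‖x‖ * ‖T N x‖ < ε ^ 2 := by
        have := hN N le_rfl
        rw [Real.dist_eq, sub_zero] at this
        calc ‖x‖ * ‖T N x‖ ≤ |‖x‖ * ‖T N x‖| := le_abs_self _
          _ < ε ^ 2 := this
      filter_upwards [Filter.eventually_ge_atTop (Finset.range N)] with s hs
      set Bs : Set Ω := ⋃ n ∈ s, f n with hBs
      set BN : Set Ω := ⋃ n ∈ Finset.range N, f n with hBN
      have hBNBs : BN ⊆ Bs :=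
        Set.iUnion₂_subset (fun i hi => Set.subset_biUnion_of_mem (hs hi))
      have hTsplit : T N = Q0 (U \ Bs) + Q0 (Bs \ BN) := by
        have hset : U \ BN = (U \ Bs) ∪ (Bs \ BN) :=
          (Set.diff_union_diff_cancel (hBsub s) hBNBs).symm
        have hdisj : Disjoint (U \ Bs) (Bs \ BN) :=
          Set.disjoint_of_subset_right Set.diff_subset Set.disjoint_sdiff_left
        show Q0 (U \ BN) = _
        rw [hset, hQ0add _ _ (hUm.diff (hBmeas s)) ((hBmeas s).diff (hBmeas _)) hdisj]
      have hre : Complex.re ⟪x, Q0 (U \ Bs) x⟫_ℂ ≤ ‖x‖ * ‖T N x‖ := by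
        have hTNsum : Complex.re ⟪x, T N x⟫_ℂ
            = Complex.re ⟪x, Q0 (U \ Bs) x⟫_ℂ + Complex.re ⟪x, Q0 (Bs \ BN) x⟫_ℂ := by
          rw [hTsplit]
          simp [inner_add_right]
        have hpos : 0 ≤ Complex.re ⟪x, Q0 (Bs \ BN) x⟫_ℂ := by
          have := (P.isPositive' (Zs (Bs \ BN))).re_inner_nonneg_right x
          simpa [RCLike.re_to_complex] using this
        have hub : Complex.re ⟪x, T N x⟫_ℂ ≤ ‖x‖ * ‖T N x‖ := by
          calc Complex.re ⟪x, T N x⟫_ℂ ≤ ‖⟪x, T N x⟫_ℂ‖ := by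
                exact Complex.re_le_norm _
            _ ≤ ‖x‖ * ‖T N x‖ := norm_inner_le_norm _ _
        linarith
      have hnormsq : ‖Q0 (U \ Bs) x‖ ^ 2 = Complex.re ⟪x, Q0 (U \ Bs) x⟫_ℂ :=
        aux_norm_sq_proj (hQsa _) (hQid _) x
      have hlt : ‖Q0 (U \ Bs) x‖ < ε := by
        have hsq : ‖Q0 (U \ Bs) x‖ ^ 2 < ε ^ 2 := by rw [hnormsq]; linarith
        exact lt_of_pow_lt_pow_left₀ 2 hε.le hsq
      have hsum : ∑ n ∈ s, Q0 (f n) x = Q0 Bs x := by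
        have := congrFun (congrArg DFunLike.coe (hQfin s)) x
        simp only [ContinuousLinearMap.sum_apply] at this
        exact this.symm
      rw [dist_eq_norm, hsum]
      have hQU : Q0 U x = Q0 Bs x + Q0 (U \ Bs) x := by
        have := congrFun (congrArg DFunLike.coe (hsplit s)) x
        simpa using this
      have hrw : Q0 Bs x - Q0 U x = -(Q0 (U \ Bs) x) := by rw [hQU]; abel
      rw [hrw, norm_neg]
      exact hlt
    exact hfinal
  -- assemble the result
  refine ⟨fun Z Z' _ _ h => wd Z Z' h,
    ⟨⟨Q0, fun X => P.isPositive' (Zs X), hQ0empty, hQ0univ, hQ0nm, hQiU⟩, ?_, ?_, ?_⟩⟩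
  · exact fun X => hQid X
  · intro X hX
    exact ⟨Zs X, hZm X, (hZv X hX).symm, rfl⟩
  · intro X
    by_cases hX : MeasurableSet X
    · ext z
      exact (hQ0Jx X hX z).symm
    · have h0 : Q0 X = 0 := hQ0nm X hX
      rw [A.not_measurable' X hX]
      show (0 : H →L[ℂ] H) = ContinuousLinearMap.adjoint J ∘L Q0 X ∘L J
      rw [h0]
      ext z
      simp
end
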